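/- arXiv:2602.01337 — 10 statements merged into one kernel-verified Lean document; each statement's English description precedes it below -/
import Mathlib

section
/- Let P and Q be real symmetric positive-definite n×n matrices, A a real n×n matrix and C a real m×n matrix such that P − AᵀQA + CᵀC ≻ 0. Define L := −A(P + CᵀC)⁻¹Cᵀ. Then P − (A + LC)ᵀQ(A + LC) ≻ 0. -/
open Matrix

/-- If `P, Q ≻ 0` are symmetric, `P − AᵀQA + CᵀC ≻ 0`, and
`L := −A(P + CᵀC)⁻¹Cᵀ`, then `P − (A + LC)ᵀQ(A + LC) ≻ 0`. -/
theorem stmt_0 {n m : ℕ} (P Q A : Matrix (Fin n) (Fin n) ℝ)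
    (C : Matrix (Fin m) (Fin n) ℝ)
    (hP : P.PosDef) (hQ : Q.PosDef)
    (h : (P - Aᵀ * Q * A + Cᵀ * C).PosDef) :
    ∀ L : Matrix (Fin n) (Fin m) ℝ, L = -(A * (P + Cᵀ * C)⁻¹ * Cᵀ) →
      (P - (A + L * C)ᵀ * Q * (A + L * C)).PosDef := by
  intro L hL
  set S : Matrix (Fin n) (Fin n) ℝ := P + Cᵀ * C with hSdef
  have hCC : (Cᵀ * C).PosSemidef := posSemidef_conjTranspose_mul_self C
  have hS : S.PosDef := hP.add_posSemidef hCC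
  have hSdet : IsUnit S.det := hS.det_pos.ne'.isUnit
  have hSS : S * S⁻¹ = 1 := mul_nonsing_inv S hSdet
  have hM : A + L * C = A * S⁻¹ * P := by
    have key : A * S⁻¹ * S = A := by rw [mul_assoc, nonsing_inv_mul S hSdet, mul_one]
    have hLC : L * C = -(A * S⁻¹ * (Cᵀ * C)) := by
      rw [hL, Matrix.neg_mul, Matrix.mul_assoc (A * S⁻¹) Cᵀ C]
    have hPeq : A * S⁻¹ * P = A - A * S⁻¹ * (Cᵀ * C) := by
      have hP' : P = S - Cᵀ * C := by rw [hSdef, add_sub_cancel_right]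
      rw [hP', Matrix.mul_sub, key]
    rw [hLC, hPeq, sub_eq_add_neg]
  set M : Matrix (Fin n) (Fin n) ℝ := A + L * C with hMdef
  have hPs : Pᵀ = P := hP.isHermitian
  have hQs : Qᵀ = Q := hQ.isHermitian
  rw [posDef_iff_dotProduct_mulVec]
  constructor
  · rw [show Mᵀ = Mᴴ from (conjTranspose_eq_transpose_of_trivial M).symm]
    exact hP.isHermitian.sub (isHermitian_conjTranspose_mul_mul M hQ.isHermitian)
  · intro x hx
    set y : Fin n → ℝ := S⁻¹ *ᵥ (P *ᵥ x) with hy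
    have hSy : S *ᵥ y = P *ᵥ x := by
      rw [hy, mulVec_mulVec, hSS, one_mulVec]
    have hyne : y ≠ 0 := by
      intro h0
      apply hx
      have : P *ᵥ x = 0 := by rw [← hSy, h0, mulVec_zero]
      have := congrArg (P⁻¹ *ᵥ ·) this
      simpa [mulVec_mulVec, nonsing_inv_mul P hP.det_pos.ne'.isUnit] using this
    have hMx : M *ᵥ x = A *ᵥ y := by
      rw [hM, ← mulVec_mulVec, ← mulVec_mulVec]
    -- key inequality from h : y ⬝ (S - AᵀQA) y > 0
    have hkey : 0 < y ⬝ᵥ (S *ᵥ y) - (A *ᵥ y) ⬝ᵥ (Q *ᵥ (A *ᵥ y)) := by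
      have := h.dotProduct_mulVec_pos hyne
      have e : (P - Aᵀ * Q * A + Cᵀ * C) *ᵥ y = S *ᵥ y - (Aᵀ * Q * A) *ᵥ y := by
        rw [hSdef]
        simp [sub_mulVec, add_mulVec]
        abel
      rw [star_trivial, e, dotProduct_sub] at this
      have e2 : y ⬝ᵥ ((Aᵀ * Q * A) *ᵥ y) = (A *ᵥ y) ⬝ᵥ (Q *ᵥ (A *ᵥ y)) := by
        rw [← mulVec_mulVec, ← mulVec_mulVec, dotProduct_mulVec, vecMul_transpose]
      linarith [this, e2.symm ▸ this]
    -- goal quadratic form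
    rw [star_trivial, sub_mulVec, dotProduct_sub]
    have egoal : x ⬝ᵥ ((Mᵀ * Q * M) *ᵥ x) = (A *ᵥ y) ⬝ᵥ (Q *ᵥ (A *ᵥ y)) := by
      rw [← mulVec_mulVec, ← mulVec_mulVec, dotProduct_mulVec, vecMul_transpose, hMx]
    rw [egoal]
    -- remains: (A*ᵥy)⬝Q(A*ᵥy) < x ⬝ P x. Have it < y⬝Sy. Show y⬝Sy ≤ x⬝Px.
    have hySy : y ⬝ᵥ (S *ᵥ y) = y ⬝ᵥ (P *ᵥ x) := by rw [hSy]
    have hSexp : y ⬝ᵥ (S *ᵥ y) = y ⬝ᵥ (P *ᵥ y) + y ⬝ᵥ ((Cᵀ * C) *ᵥ y) := by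
      rw [hSdef, add_mulVec, dotProduct_add]
    have hsym : x ⬝ᵥ (P *ᵥ y) = y ⬝ᵥ (P *ᵥ x) := by
      rw [dotProduct_mulVec, ← hPs, vecMul_transpose, hPs, dotProduct_comm]
    have hxyP : 0 ≤ (x - y) ⬝ᵥ (P *ᵥ (x - y)) := by
      simpa [star_trivial] using hP.posSemidef.dotProduct_mulVec_nonneg (x - y)
    have hexp : (x - y) ⬝ᵥ (P *ᵥ (x - y)) =
        x ⬝ᵥ (P *ᵥ x) - x ⬝ᵥ (P *ᵥ y) - y ⬝ᵥ (P *ᵥ x) + y ⬝ᵥ (P *ᵥ y) := by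
      simp [sub_mulVec, mulVec_sub, dotProduct_sub, sub_dotProduct]
      ring
    have hCy : 0 ≤ y ⬝ᵥ ((Cᵀ * C) *ᵥ y) := by simpa [star_trivial] using hCC.dotProduct_mulVec_nonneg y
    linarith
end

section
/- Consider the polytopic setup: a set ℙ ⊆ ℝ^{n_p}, continuous functions ξ_i : ℙ → ℝ_{≥0}, i = 1,…,N, with ∑_{i=1}^N ξ_i(π) = 1 for all π ∈ ℙ, matrices A_i ∈ ℝ^{n_x×n_x} and C ∈ ℝ^{n_y×n_x}, and A(π) := ∑_i ξ_i(π)A_i. Suppose there exist symmetric positive-definite matrices P̄_i ∈ ℝ^{n_x×n_x}, i = 1,…,N, such that P̄_i − A_iᵀP̄_jA_i + CᵀC ≻ 0 for all i,j ∈ {1,…,N}. Define P(π) := ∑_i ξ_i(π)P̄_i and the observer gain L̄(π) := −∑_i ξ_i(π) A_i(P̄_i + CᵀC)⁻¹Cᵀ. Then for all π, π₊ ∈ ℙ: P(π) − (A(π) + L̄(π)C)ᵀ P(π₊) (A(π) + L̄(π)C) ≻ 0. -/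
open Matrix Finset

lemma tr_of_herm {n : ℕ} {M : Matrix (Fin n) (Fin n) ℝ} (h : M.IsHermitian) : Mᵀ = M := by
  rw [← conjTranspose_eq_transpose_of_trivial]; exact h

lemma herm_of_tr {n : ℕ} {M : Matrix (Fin n) (Fin n) ℝ} (h : Mᵀ = M) : M.IsHermitian := by
  rwa [Matrix.IsHermitian, conjTranspose_eq_transpose_of_trivial]

lemma smulPSD {n : ℕ} {c : ℝ} (hc : 0 ≤ c) {M : Matrix (Fin n) (Fin n) ℝ} (hM : M.PosSemidef) :
    (c • M).PosSemidef := by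
  refine Matrix.PosSemidef.of_dotProduct_mulVec_nonneg ?_ ?_
  · unfold Matrix.IsHermitian at *
    rw [conjTranspose_smul, hM.1]; simp
  · intro x
    have := hM.dotProduct_mulVec_nonneg x
    simp only [smul_mulVec, dotProduct_smul, smul_eq_mul]
    positivity

lemma sumPSD {n N : ℕ} {f : Fin N → Matrix (Fin n) (Fin n) ℝ}
    (hf : ∀ i, (f i).PosSemidef) : (∑ i, f i).PosSemidef :=
  Finset.sum_induction f _ (fun _ _ ha hb => ha.add hb) Matrix.PosSemidef.zero (fun i _ => hf i)

lemma sum_mulVec' {N n m : ℕ} (f : Fin N → Matrix (Fin m) (Fin n) ℝ) (x : Fin n → ℝ) :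
    (∑ i, f i) *ᵥ x = ∑ i, f i *ᵥ x := by
  ext k
  simp only [Matrix.mulVec, dotProduct, Finset.sum_apply, Matrix.sum_apply, Finset.sum_mul]
  exact Finset.sum_comm

lemma dotProduct_sum' {N n : ℕ} (v : Fin n → ℝ) (w : Fin N → (Fin n → ℝ)) :
    v ⬝ᵥ (∑ i, w i) = ∑ i, v ⬝ᵥ w i := by
  simp only [dotProduct, Finset.sum_apply, Finset.mul_sum]
  exact Finset.sum_comm

lemma sum_dotProduct' {N n : ℕ} (w : Fin N → (Fin n → ℝ)) (v : Fin n → ℝ) :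
    (∑ i, w i) ⬝ᵥ v = ∑ i, w i ⬝ᵥ v := by
  simp only [dotProduct, Finset.sum_apply, Finset.sum_mul]
  exact Finset.sum_comm

lemma convexPD {nx N : ℕ} (a b : Fin N → ℝ) (ha : ∀ i, 0 ≤ a i) (hb : ∀ j, 0 ≤ b j)
    (hsa : ∑ i, a i = 1) (hsb : ∑ j, b j = 1)
    (Pbar F : Fin N → Matrix (Fin nx) (Fin nx) ℝ) (hPD : ∀ i, (Pbar i).PosDef)
    (hV : ∀ i j, (Pbar i - (F i)ᵀ * Pbar j * F i).PosDef) :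
    ((∑ i, a i • Pbar i) - (∑ i, a i • F i)ᵀ * (∑ j, b j • Pbar j) * (∑ i, a i • F i)).PosDef := by
  have hPbt : ∀ j, (Pbar j)ᵀ = Pbar j := fun j => tr_of_herm (hPD j).1
  have hQt : (∑ j, b j • Pbar j)ᵀ = ∑ j, b j • Pbar j := by
    rw [Matrix.transpose_sum]
    exact Finset.sum_congr rfl fun j _ => by rw [Matrix.transpose_smul, hPbt]
  have hQsd : (∑ j, b j • Pbar j).PosSemidef :=
    sumPSD fun j => smulPSD (hb j) (hPD j).posSemidef
  refine Matrix.PosDef.of_dotProduct_mulVec_pos ?_ ?_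
  · apply herm_of_tr
    rw [Matrix.transpose_sub, Matrix.transpose_mul, Matrix.transpose_mul, transpose_transpose,
      hQt, Matrix.mul_assoc]
    congr 1
    rw [Matrix.transpose_sum]
    exact Finset.sum_congr rfl fun i _ => by rw [Matrix.transpose_smul, hPbt]
  · intro x hx
    rw [star_trivial]
    set Q : Matrix (Fin nx) (Fin nx) ℝ := ∑ j, b j • Pbar j with hQdef
    set G : Matrix (Fin nx) (Fin nx) ℝ := ∑ i, a i • F i with hGdef
    -- notation
    have hq : ∀ u, 0 ≤ u ⬝ᵥ (Q *ᵥ u) := fun u => by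
      have := hQsd.dotProduct_mulVec_nonneg u; rwa [star_trivial] at this
    have hsymm : ∀ u u', u ⬝ᵥ (Q *ᵥ u') = u' ⬝ᵥ (Q *ᵥ u) := by
      intro u u'
      rw [dotProduct_mulVec, ← Matrix.mulVec_transpose, hQt, dotProduct_comm]
    have hGx : G *ᵥ x = ∑ i, a i • (F i *ᵥ x) := by
      rw [hGdef, sum_mulVec']
      exact Finset.sum_congr rfl fun i _ => smul_mulVec _ _ _
    set v : Fin N → (Fin nx → ℝ) := fun i => F i *ᵥ x with hv
    set r : Fin N → ℝ := fun i => x ⬝ᵥ (Pbar i *ᵥ x) with hr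
    set s : Fin N → Fin N → ℝ := fun i j => v i ⬝ᵥ (Pbar j *ᵥ v i) with hs
    set q : Fin N → ℝ := fun i => v i ⬝ᵥ (Q *ᵥ v i) with hqdef
    -- step 1
    have step1 : x ⬝ᵥ ((∑ i, a i • Pbar i) *ᵥ x) = ∑ i, a i * r i := by
      rw [sum_mulVec', dotProduct_sum']
      exact Finset.sum_congr rfl fun i _ => by
        rw [smul_mulVec, dotProduct_smul, smul_eq_mul, hr]
    -- step 2
    have step2 : x ⬝ᵥ ((Gᵀ * Q * G) *ᵥ x) = (G *ᵥ x) ⬝ᵥ (Q *ᵥ (G *ᵥ x)) := by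
      rw [← Matrix.mulVec_mulVec, ← Matrix.mulVec_mulVec, dotProduct_mulVec,
        Matrix.vecMul_transpose]
    -- bilinear expansion
    have expand : ∀ (u : Fin N → (Fin nx → ℝ)) (c : Fin N → ℝ) (z : Fin nx → ℝ),
        z ⬝ᵥ (Q *ᵥ (∑ i, c i • u i)) = ∑ i, c i * (z ⬝ᵥ (Q *ᵥ u i)) := by
      intro u c z
      rw [show (∑ i, c i • u i) = ∑ i, (fun i => c i • u i) i from rfl,
        show Q *ᵥ (∑ i, c i • u i) = ∑ i, Q *ᵥ (c i • u i) from ?_, dotProduct_sum']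
      · exact Finset.sum_congr rfl fun i _ => by
          rw [Matrix.mulVec_smul, dotProduct_smul, smul_eq_mul]
      · ext k
        simp only [Matrix.mulVec, dotProduct, Finset.sum_apply, Finset.mul_sum, Pi.smul_apply,
          smul_eq_mul]
        rw [Finset.sum_comm]
    have hww : (G *ᵥ x) ⬝ᵥ (Q *ᵥ (G *ᵥ x)) = ∑ i, ∑ j, (a i * a j) * (v i ⬝ᵥ (Q *ᵥ v j)) := by
      rw [hGx]
      rw [show (∑ i, a i • v i) ⬝ᵥ (Q *ᵥ (∑ i, a i • v i))
          = ∑ i, a i * (v i ⬝ᵥ (Q *ᵥ (∑ j, a j • v j))) from by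
        rw [sum_dotProduct']
        exact Finset.sum_congr rfl fun i _ => by rw [smul_dotProduct, smul_eq_mul]]
      refine Finset.sum_congr rfl fun i _ => ?_
      rw [expand v a (v i), Finset.mul_sum]
      exact Finset.sum_congr rfl fun j _ => by ring
    -- Jensen bound
    have jensen : (G *ᵥ x) ⬝ᵥ (Q *ᵥ (G *ᵥ x)) ≤ ∑ i, a i * q i := by
      rw [hww]
      have bound : ∀ i j, (a i * a j) * (v i ⬝ᵥ (Q *ᵥ v j)) ≤ (a i * a j) * ((q i + q j) / 2) := by
        intro i j
        refine mul_le_mul_of_nonneg_left ?_ (mul_nonneg (ha i) (ha j))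
        have h0 := hq (v i - v j)
        rw [sub_dotProduct, Matrix.mulVec_sub, dotProduct_sub, dotProduct_sub] at h0
        have hsym := hsymm (v j) (v i)
        simp only [hqdef] at *
        linarith
      calc ∑ i, ∑ j, (a i * a j) * (v i ⬝ᵥ (Q *ᵥ v j))
          ≤ ∑ i, ∑ j, (a i * a j) * ((q i + q j) / 2) :=
            Finset.sum_le_sum fun i _ => Finset.sum_le_sum fun j _ => bound i j
        _ = ∑ i, a i * q i := by
            have inner : ∀ i, ∑ j, (a i * a j) * ((q i + q j) / 2)
                = a i * q i / 2 + a i * (∑ j, a j * q j) / 2 := by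
              intro i
              have h1 : ∀ j, (a i * a j) * ((q i + q j) / 2)
                  = (a i * q i / 2) * a j + (a i / 2) * (a j * q j) := fun j => by ring
              simp_rw [h1]
              rw [Finset.sum_add_distrib, ← Finset.mul_sum, ← Finset.mul_sum, hsa, mul_one]
              ring
            simp_rw [inner]
            rw [Finset.sum_add_distrib, ← Finset.sum_div, ← Finset.sum_div, ← Finset.sum_mul]
            rw [hsa]
            ring
    -- q in terms of s
    have hqs : ∀ i, q i = ∑ j, b j * s i j := by
      intro i
      rw [hqdef]
      simp only [hQdef]
      rw [sum_mulVec', dotProduct_sum']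
      exact Finset.sum_congr rfl fun j _ => by
        rw [smul_mulVec, dotProduct_smul, smul_eq_mul, hs]
    -- strict vertex inequality
    have step5 : ∀ i j, s i j < r i := by
      intro i j
      have h5 := (hV i j).dotProduct_mulVec_pos hx
      rw [star_trivial, Matrix.sub_mulVec, dotProduct_sub] at h5
      have h6 : x ⬝ᵥ (((F i)ᵀ * Pbar j * F i) *ᵥ x) = s i j := by
        rw [← Matrix.mulVec_mulVec, ← Matrix.mulVec_mulVec, dotProduct_mulVec,
          Matrix.vecMul_transpose]
      rw [h6] at h5
      rw [hr, hs]
      linarith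
    -- conclude
    have hEx : ∃ i, 0 < a i := by
      by_contra h
      push_neg at h
      have : (∑ i, a i) ≤ 0 := Finset.sum_nonpos fun i _ => h i
      rw [hsa] at this; linarith
    have hEx2 : ∃ j, 0 < b j := by
      by_contra h
      push_neg at h
      have : (∑ j, b j) ≤ 0 := Finset.sum_nonpos fun j _ => h j
      rw [hsb] at this; linarith
    have key : ∑ i, a i * q i < ∑ i, a i * r i := by
      have hlt : ∀ i, q i ≤ r i ∧ (0 < a i → q i < r i) := by
        intro i
        constructor
        · rw [hqs i]
          calc ∑ j, b j * s i j ≤ ∑ j, b j * r i :=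
                Finset.sum_le_sum fun j _ => mul_le_mul_of_nonneg_left (step5 i j).le (hb j)
            _ = r i := by rw [← Finset.sum_mul, hsb, one_mul]
        · intro _
          rw [hqs i]
          obtain ⟨j0, hj0⟩ := hEx2
          calc ∑ j, b j * s i j < ∑ j, b j * r i := by
                refine Finset.sum_lt_sum (fun j _ => mul_le_mul_of_nonneg_left (step5 i j).le (hb j))
                  ⟨j0, Finset.mem_univ j0, ?_⟩
                exact mul_lt_mul_of_pos_left (step5 i j0) hj0
            _ = r i := by rw [← Finset.sum_mul, hsb, one_mul]
      obtain ⟨i0, hi0⟩ := hEx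
      refine Finset.sum_lt_sum (fun i _ => ?_) ⟨i0, Finset.mem_univ i0, ?_⟩
      · rcases (ha i).lt_or_eq with h | h
        · exact mul_le_mul_of_nonneg_left (hlt i).1 h.le
        · rw [← h]; simp
      · exact mul_lt_mul_of_pos_left ((hlt i0).2 hi0) hi0
    have final : x ⬝ᵥ (((∑ i, a i • Pbar i) - Gᵀ * Q * G) *ᵥ x)
        = x ⬝ᵥ ((∑ i, a i • Pbar i) *ᵥ x) - x ⬝ᵥ ((Gᵀ * Q * G) *ᵥ x) := by
      rw [Matrix.sub_mulVec, dotProduct_sub]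
    rw [final, step1, step2]
    have := le_trans jensen key.le
    have h7 : (G *ᵥ x) ⬝ᵥ (Q *ᵥ (G *ᵥ x)) ≤ ∑ i, a i * q i := jensen
    linarith

lemma conjPosDef {n : ℕ} {D T : Matrix (Fin n) (Fin n) ℝ} (hD : D.PosDef) (hT : IsUnit T.det) :
    (Tᵀ * D * T).PosDef := by
  refine Matrix.PosDef.of_dotProduct_mulVec_pos ?_ ?_
  · have h := isHermitian_conjTranspose_mul_mul T hD.1
    rwa [conjTranspose_eq_transpose_of_trivial] at h
  · intro x hx
    have hTx : T *ᵥ x ≠ 0 := by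
      intro h
      apply hx
      have h2 := congrArg (fun v => T⁻¹ *ᵥ v) h
      simpa [Matrix.mulVec_mulVec, Matrix.nonsing_inv_mul _ hT] using h2
    have h3 := hD.dotProduct_mulVec_pos hTx
    simpa [star_trivial, ← Matrix.mulVec_mulVec, Matrix.dotProduct_mulVec,
      Matrix.vecMul_transpose] using h3

lemma keyId {n : ℕ} (P S J K G : Matrix (Fin n) (Fin n) ℝ)
    (h1 : J * S = 1) (h2 : S * J = 1) (hP : P = S - K) :
    P - P * J * G * (J * P) = P * J * (S - G) * (J * P) + (K - K * J * K) := by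
  subst hP
  simp only [Matrix.mul_sub, Matrix.sub_mul, Matrix.mul_assoc]
  simp only [← Matrix.mul_assoc, h1, h2, Matrix.one_mul, Matrix.mul_one]
  abel

lemma vertexAux {nx : ℕ} (Ai : Matrix (Fin nx) (Fin nx) ℝ)
    {Pi Pj K : Matrix (Fin nx) (Fin nx) ℝ} (hPi : Pi.PosDef) (hKsd : K.PosSemidef)
    (hR : (K - K * (Pi + K)⁻¹ * K).PosSemidef)
    (hLMI : (Pi - Aiᵀ * Pj * Ai + K).PosDef) :
    (Pi - (Ai - Ai * (Pi + K)⁻¹ * K)ᵀ * Pj * (Ai - Ai * (Pi + K)⁻¹ * K)).PosDef := by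
  have hS : (Pi + K).PosDef := hPi.add_posSemidef hKsd
  have hdet : IsUnit (Pi + K).det := isUnit_iff_ne_zero.mpr hS.det_pos.ne'
  have h1 : (Pi + K)⁻¹ * (Pi + K) = 1 := Matrix.nonsing_inv_mul _ hdet
  have h2 : (Pi + K) * (Pi + K)⁻¹ = 1 := Matrix.mul_nonsing_inv _ hdet
  have hPiS : Pi = (Pi + K) - K := by abel
  have hinv : (Pi + K)⁻¹ * Pi = 1 - (Pi + K)⁻¹ * K := by
    calc (Pi + K)⁻¹ * Pi = (Pi + K)⁻¹ * ((Pi + K) - K) := by rw [add_sub_cancel_right]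
      _ = 1 - (Pi + K)⁻¹ * K := by rw [Matrix.mul_sub, h1]
  have hF : Ai - Ai * (Pi + K)⁻¹ * K = Ai * ((Pi + K)⁻¹ * Pi) := by
    rw [hinv, Matrix.mul_sub, Matrix.mul_one, Matrix.mul_assoc]
  rw [hF]
  have hPit : Piᵀ = Pi := tr_of_herm hPi.1
  have hSit : ((Pi + K)⁻¹)ᵀ = (Pi + K)⁻¹ := by
    rw [Matrix.transpose_nonsing_inv, tr_of_herm hS.1]
  have hFt : (Ai * ((Pi + K)⁻¹ * Pi))ᵀ = Pi * (Pi + K)⁻¹ * Aiᵀ := by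
    rw [Matrix.transpose_mul, Matrix.transpose_mul, hPit, hSit]
  rw [hFt]
  have key : Pi - Pi * (Pi + K)⁻¹ * Aiᵀ * Pj * (Ai * ((Pi + K)⁻¹ * Pi)) =
      ((Pi + K)⁻¹ * Pi)ᵀ * ((Pi + K) - Aiᵀ * Pj * Ai) * ((Pi + K)⁻¹ * Pi)
        + (K - K * (Pi + K)⁻¹ * K) := by
    rw [Matrix.transpose_mul, hPit, hSit]
    have := keyId Pi (Pi + K) (Pi + K)⁻¹ K (Aiᵀ * Pj * Ai) h1 h2 hPiS
    calc Pi - Pi * (Pi + K)⁻¹ * Aiᵀ * Pj * (Ai * ((Pi + K)⁻¹ * Pi))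
        = Pi - Pi * (Pi + K)⁻¹ * (Aiᵀ * Pj * Ai) * ((Pi + K)⁻¹ * Pi) := by
          simp only [Matrix.mul_assoc]
      _ = Pi * (Pi + K)⁻¹ * ((Pi + K) - Aiᵀ * Pj * Ai) * ((Pi + K)⁻¹ * Pi)
            + (K - K * (Pi + K)⁻¹ * K) := this
  rw [key]
  have hD : ((Pi + K) - Aiᵀ * Pj * Ai).PosDef := by
    have h9 : Pi - Aiᵀ * Pj * Ai + K = (Pi + K) - Aiᵀ * Pj * Ai := by abel
    rwa [h9] at hLMI
  have hTdet : IsUnit ((Pi + K)⁻¹ * Pi).det := by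
    rw [Matrix.det_mul]
    exact isUnit_iff_ne_zero.mpr (mul_ne_zero hS.inv.det_pos.ne' hPi.det_pos.ne')
  exact (conjPosDef hD hTdet).add_posSemidef hR

lemma schurR {nx ny : ℕ} (C : Matrix (Fin ny) (Fin nx) ℝ)
    {Pi : Matrix (Fin nx) (Fin nx) ℝ} (hPi : Pi.PosDef) :
    (Cᵀ * C - Cᵀ * C * (Pi + Cᵀ * C)⁻¹ * (Cᵀ * C)).PosSemidef := by
  have hKsd : (Cᵀ * C).PosSemidef := by
    have := Matrix.posSemidef_conjTranspose_mul_self C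
    rwa [conjTranspose_eq_transpose_of_trivial] at this
  have hS : (Pi + Cᵀ * C).PosDef := hPi.add_posSemidef hKsd
  have hCt : (Cᵀ)ᴴ = C := by
    rw [conjTranspose_eq_transpose_of_trivial, transpose_transpose]
  haveI := Matrix.invertibleOfIsUnitDet _ (isUnit_iff_ne_zero.mpr hS.det_pos.ne')
  haveI : Invertible (1 : Matrix (Fin ny) (Fin ny) ℝ) := invertibleOne
  have hblock : (fromBlocks (Pi + Cᵀ * C) Cᵀ (Cᵀ)ᴴ (1 : Matrix (Fin ny) (Fin ny) ℝ)).PosSemidef := by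
    rw [Matrix.PosDef.fromBlocks₂₂ _ _ Matrix.PosDef.one]
    rw [hCt, inv_one, Matrix.mul_one, add_sub_cancel_right]
    exact hPi.posSemidef
  have hmid : ((1 : Matrix (Fin ny) (Fin ny) ℝ) - (Cᵀ)ᴴ * (Pi + Cᵀ * C)⁻¹ * Cᵀ).PosSemidef := by
    rw [← Matrix.PosDef.fromBlocks₁₁ _ _ hS]
    exact hblock
  have hfin := hmid.conjTranspose_mul_mul_same C
  rw [conjTranspose_eq_transpose_of_trivial, hCt] at hfin
  have : Cᵀ * (1 - C * (Pi + Cᵀ * C)⁻¹ * Cᵀ) * C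
      = Cᵀ * C - Cᵀ * C * (Pi + Cᵀ * C)⁻¹ * (Cᵀ * C) := by
    simp only [Matrix.mul_sub, Matrix.sub_mul, Matrix.mul_one, Matrix.mul_assoc]
  rwa [this] at hfin


/-- sufficiency direction of Theorem 1: In the polytopic setup, if the
vertex LMIs `P̄ᵢ − AᵢᵀP̄ⱼAᵢ + CᵀC ≻ 0` hold for symmetric positive definite `P̄ᵢ`,
then with `P(π) = ∑ᵢ ξᵢ(π)P̄ᵢ`, `A(π) = ∑ᵢ ξᵢ(π)Aᵢ` and the observer gain
`L̄(π) = −∑ᵢ ξᵢ(π)Aᵢ(P̄ᵢ + CᵀC)⁻¹Cᵀ`, we have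
`P(π) − (A(π) + L̄(π)C)ᵀP(πplus)(A(π) + L̄(π)C) ≻ 0` for all `π, πplus ∈ ℙ`. -/
theorem stmt_1 {np nx ny N : ℕ} (Pset : Set (Fin np → ℝ))
    (ξ : Fin N → (Fin np → ℝ) → ℝ)
    (hcont : ∀ i, ContinuousOn (ξ i) Pset)
    (hnonneg : ∀ i, ∀ π ∈ Pset, 0 ≤ ξ i π)
    (hsum : ∀ π ∈ Pset, ∑ i, ξ i π = 1)
    (A : Fin N → Matrix (Fin nx) (Fin nx) ℝ)
    (C : Matrix (Fin ny) (Fin nx) ℝ)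
    (Pbar : Fin N → Matrix (Fin nx) (Fin nx) ℝ)
    (hPD : ∀ i, (Pbar i).PosDef)
    (hLMI : ∀ i j, (Pbar i - (A i)ᵀ * Pbar j * A i + Cᵀ * C).PosDef) :
    ∀ π ∈ Pset, ∀ πplus ∈ Pset,
      ((∑ i, ξ i π • Pbar i) -
        ((∑ i, ξ i π • A i) + (-∑ i, ξ i π • (A i * (Pbar i + Cᵀ * C)⁻¹ * Cᵀ)) * C)ᵀ *
          (∑ i, ξ i πplus • Pbar i) *
        ((∑ i, ξ i π • A i) + (-∑ i, ξ i π • (A i * (Pbar i + Cᵀ * C)⁻¹ * Cᵀ)) * C)).PosDef := by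
  intro π hπ πplus hπplus
  have hG : ((∑ i, ξ i π • A i) + (-∑ i, ξ i π • (A i * (Pbar i + Cᵀ * C)⁻¹ * Cᵀ)) * C)
      = ∑ i, ξ i π • (A i - A i * (Pbar i + Cᵀ * C)⁻¹ * Cᵀ * C) := by
    rw [Matrix.neg_mul, Matrix.sum_mul, ← sub_eq_add_neg, ← Finset.sum_sub_distrib]
    refine Finset.sum_congr rfl fun i _ => ?_
    rw [Matrix.smul_mul, ← smul_sub]
  rw [hG]
  have hKsd : (Cᵀ * C).PosSemidef := by
    have h0 := Matrix.posSemidef_conjTranspose_mul_self C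
    rwa [conjTranspose_eq_transpose_of_trivial] at h0
  refine convexPD (fun i => ξ i π) (fun j => ξ j πplus)
    (fun i => hnonneg i π hπ) (fun j => hnonneg j πplus hπplus)
    (hsum π hπ) (hsum πplus hπplus) Pbar
    (fun i => A i - A i * (Pbar i + Cᵀ * C)⁻¹ * Cᵀ * C) hPD ?_
  intro i j
  have h := vertexAux (A i) (hPD i) hKsd (schurR C (hPD i)) (hLMI i j)
  rwa [← Matrix.mul_assoc (A i * (Pbar i + Cᵀ * C)⁻¹) Cᵀ C] at h
end

section
/- Consider the polytopic setup: a compact set ℙ ⊆ ℝ^{n_p}, continuous functions ξ_i : ℙ → ℝ_{≥0}, i = 1,…,N, with ∑_{i=1}^N ξ_i(π) = 1 for all π ∈ ℙ, matrices A_i ∈ ℝ^{n_x×n_x} and C ∈ ℝ^{n_y×n_x}, and A(π) := ∑_i ξ_i(π)A_i. Assume strict polytopicity: for each i ∈ {1,…,N} there exists π_i ∈ ℙ with ξ_j(π_i) = 1 if j = i and 0 otherwise. Suppose the system is poly-Q detectable, i.e., there exist a map L : ℕ × (ℕ → ℙ) → ℝ^{n_x×n_y}, symmetric matrices P̄_i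 ∈ ℝ^{n_x×n_x} with P(π) := ∑_i ξ_i(π)P̄_i, and constants a₁,a₂,a₃ > 0 such that for every sequence p : ℕ → ℙ, every k ∈ ℕ and every e ∈ ℝ^{n_x}: a₁‖e‖² ≤ eᵀP(p_k)e ≤ a₂‖e‖², and with e₊ := (A(p_k) + L(k,p)C)e it holds that e₊ᵀP(p_{k+1})e₊ ≤ eᵀP(p_k)e − a₃‖e‖². Then there exist symmetric positive-definite matrices Q̄_i ∈ ℝ^{n_x×n_x}, i = 1,…,N, such that Q̄_i − A_iᵀQ̄_jA_i + CᵀC ≻ 0 for all i,j ∈ {1,…,N}. -/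
open Matrix


private lemma quad_cont {n : ℕ} (M : Matrix (Fin n) (Fin n) ℝ) :
    Continuous fun x : Fin n → ℝ => x ⬝ᵥ (M *ᵥ x) := by
  simp only [dotProduct, mulVec]
  exact continuous_finset_sum _ fun i _ => (continuous_apply i).mul
    (continuous_finset_sum _ fun j _ => continuous_const.mul (continuous_apply j))

private lemma psi_cont {m n : ℕ} (C : Matrix (Fin m) (Fin n) ℝ) :
    Continuous fun x : Fin n → ℝ => (C *ᵥ x) ⬝ᵥ (C *ᵥ x) := by
  simp only [dotProduct, mulVec]
  exact continuous_finset_sum _ fun i _ =>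
    ((continuous_finset_sum _ fun j _ => continuous_const.mul (continuous_apply j)).mul
     (continuous_finset_sum _ fun j _ => continuous_const.mul (continuous_apply j)))

private lemma dp_self_nonneg {n : ℕ} (x : Fin n → ℝ) : 0 ≤ x ⬝ᵥ x :=
  Finset.sum_nonneg fun i _ => mul_self_nonneg _

private lemma key {n m : ℕ} (M : Matrix (Fin n) (Fin n) ℝ) (C : Matrix (Fin m) (Fin n) ℝ)
    (a : ℝ) (ha : 0 < a)
    (h : ∀ x : Fin n → ℝ, C *ᵥ x = 0 → a * (x ⬝ᵥ x) ≤ x ⬝ᵥ (M *ᵥ x)) :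
    ∃ ε > 0, ∀ ε' : ℝ, 0 < ε' → ε' ≤ ε → ∀ x : Fin n → ℝ, x ≠ 0 →
      0 < ε' * (x ⬝ᵥ (M *ᵥ x)) + (C *ᵥ x) ⬝ᵥ (C *ᵥ x) := by
  set φ : (Fin n → ℝ) → ℝ := fun x => x ⬝ᵥ (M *ᵥ x) with hφdef
  set ψ : (Fin n → ℝ) → ℝ := fun x => (C *ᵥ x) ⬝ᵥ (C *ᵥ x) with hψdef
  have hφc : Continuous φ := quad_cont M
  have hψc : Continuous ψ := psi_cont C
  set S : Set (Fin n → ℝ) := {x | x ⬝ᵥ x = 1} with hSdef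
  have hc0 : Continuous fun x : Fin n → ℝ => x ⬝ᵥ x := by
    simp only [dotProduct]
    exact continuous_finset_sum _ fun i _ => (continuous_apply i).mul (continuous_apply i)
  have hScl : IsClosed S := isClosed_eq hc0 continuous_const
  have hSsub : S ⊆ Metric.closedBall 0 1 := by
    intro x hx
    rw [Metric.mem_closedBall, dist_zero_right]
    rw [pi_norm_le_iff_of_nonneg zero_le_one]
    intro i
    rw [Real.norm_eq_abs, abs_le_one_iff_mul_self_le_one]
    have := Finset.single_le_sum (f := fun j => x j * x j)
      (fun j _ => mul_self_nonneg _) (Finset.mem_univ i)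
    calc x i * x i ≤ ∑ j, x j * x j := this
      _ = 1 := hx
  have hScpt : IsCompact S :=
    (isCompact_closedBall (0 : Fin n → ℝ) 1).of_isClosed_subset hScl hSsub
  -- main claim on the sphere
  have main : ∃ ε > 0, ∀ ε' : ℝ, 0 < ε' → ε' ≤ ε → ∀ y ∈ S, 0 < ε' * φ y + ψ y := by
    set K : Set (Fin n → ℝ) := S ∩ {x | φ x ≤ a / 2} with hKdef
    have hKcl : IsClosed K := hScl.inter (isClosed_le hφc continuous_const)
    have hKcpt : IsCompact K := hScpt.of_isClosed_subset hKcl Set.inter_subset_left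
    by_cases hK : K.Nonempty
    · obtain ⟨x₀, hx₀, hm0⟩ := hKcpt.exists_isMinOn hK hψc.continuousOn
      obtain ⟨x₁, hx₁, hm1⟩ := hKcpt.exists_isMaxOn hK hφc.neg.continuousOn
      set δ := ψ x₀ with hδdef
      set B := -φ x₁ with hBdef
      have hδpos : 0 < δ := by
        rcases lt_or_eq_of_le (dp_self_nonneg (C *ᵥ x₀)) with hlt | heq
        · exact hlt
        · exfalso
          have hCx : C *ᵥ x₀ = 0 := dotProduct_self_eq_zero.mp heq.symm
          have h1 := h x₀ hCx
          have h2 : x₀ ⬝ᵥ x₀ = 1 := hx₀.1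
          have h3 : φ x₀ ≤ a / 2 := hx₀.2
          rw [h2, mul_one] at h1
          simp only [hφdef] at h3
          linarith
      have hlb : ∀ y ∈ K, -|B| ≤ φ y := by
        intro y hy
        have := hm1 hy
        simp only [Set.mem_setOf_eq, neg_le_neg_iff] at this
        have hB : φ y ≥ -B := by simpa [hBdef] using this
        have : -|B| ≤ -B := neg_le_neg (le_abs_self B)
        linarith
      refine ⟨δ / (2 * (|B| + 1)), by positivity, ?_⟩
      intro ε' hε'pos hε'le y hyS
      by_cases hyK : φ y ≤ a / 2
      · have hyK' : y ∈ K := ⟨hyS, hyK⟩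
        have h1 : δ ≤ ψ y := hm0 hyK'
        have h2 : -|B| ≤ φ y := hlb y hyK'
        have habs : (0:ℝ) ≤ |B| := abs_nonneg B
        have hεB : ε' * |B| ≤ δ / 2 := by
          have : ε' * |B| ≤ δ / (2 * (|B| + 1)) * |B| :=
            mul_le_mul_of_nonneg_right hε'le habs
          have h4 : δ / (2 * (|B| + 1)) * |B| ≤ δ / 2 := by
            rw [div_mul_eq_mul_div, div_le_div_iff₀ (by positivity) (by norm_num)]
            nlinarith
          linarith
        have : -(ε' * |B|) ≤ ε' * φ y := by nlinarith
        linarith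
      · push_neg at hyK
        have h1 : 0 ≤ ψ y := dp_self_nonneg _
        nlinarith
    · refine ⟨1, one_pos, ?_⟩
      intro ε' hε'pos _ y hyS
      have hyφ : a / 2 < φ y := by
        by_contra hcon
        push_neg at hcon
        exact hK ⟨y, hyS, hcon⟩
      have h1 : 0 ≤ ψ y := dp_self_nonneg _
      nlinarith
  obtain ⟨ε, hεpos, hε⟩ := main
  refine ⟨ε, hεpos, ?_⟩
  intro ε' hε'pos hε'le x hx
  have hxx : 0 < x ⬝ᵥ x :=
    lt_of_le_of_ne (dp_self_nonneg x) (fun hc => hx (dotProduct_self_eq_zero.mp hc.symm))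
  set r : ℝ := Real.sqrt (x ⬝ᵥ x) with hrdef
  have hrpos : 0 < r := Real.sqrt_pos.mpr hxx
  have hr2 : r * r = x ⬝ᵥ x := Real.mul_self_sqrt (le_of_lt hxx)
  set y : Fin n → ℝ := r⁻¹ • x with hydef
  have hyS : y ∈ S := by
    show y ⬝ᵥ y = 1
    rw [hydef, smul_dotProduct, dotProduct_smul, smul_eq_mul, smul_eq_mul]
    field_simp
    linarith [hr2]
  have hkey := hε ε' hε'pos hε'le y hyS
  have hφy : φ y = r⁻¹ * (r⁻¹ * φ x) := by
    simp only [hφdef, hydef, smul_dotProduct, mulVec_smul, dotProduct_smul, smul_eq_mul]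
  have hψy : ψ y = r⁻¹ * (r⁻¹ * ψ x) := by
    simp only [hψdef, hydef, mulVec_smul, smul_dotProduct, dotProduct_smul, smul_eq_mul]
  rw [hφy, hψy] at hkey
  have hinv : 0 < r⁻¹ * r⁻¹ := by positivity
  nlinarith [hkey]

/-- necessity direction of Theorem 1: If a strictly polytopic system is
poly-Q detectable (there is an observer gain `L(k,p)` and a poly-quadratic Lyapunov
function `V(π,e) = eᵀP(π)e` for the error system `e₊ = (A(p_k) + L(k,p)C)e`), then
there exist symmetric positive definite `Q̄ᵢ` with `Q̄ᵢ − AᵢᵀQ̄ⱼAᵢ + CᵀC ≻ 0` for all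
`i, j`. -/
theorem stmt_2 {np nx ny N : ℕ} (Pset : Set (Fin np → ℝ)) (hcomp : IsCompact Pset)
    (ξ : Fin N → (Fin np → ℝ) → ℝ)
    (hcont : ∀ i, ContinuousOn (ξ i) Pset)
    (hnonneg : ∀ i, ∀ π ∈ Pset, 0 ≤ ξ i π)
    (hsum : ∀ π ∈ Pset, ∑ i, ξ i π = 1)
    (A : Fin N → Matrix (Fin nx) (Fin nx) ℝ)
    (C : Matrix (Fin ny) (Fin nx) ℝ)
    (hstrict : ∀ i, ∃ π ∈ Pset, ∀ j, ξ j π = if j = i then 1 else 0)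
    (L : ℕ → (ℕ → (Fin np → ℝ)) → Matrix (Fin nx) (Fin ny) ℝ)
    (Pbar : Fin N → Matrix (Fin nx) (Fin nx) ℝ)
    (hPsym : ∀ i, (Pbar i).IsSymm)
    (a₁ a₂ a₃ : ℝ) (ha₁ : 0 < a₁) (ha₂ : 0 < a₂) (ha₃ : 0 < a₃)
    (hbounds : ∀ p : ℕ → (Fin np → ℝ), (∀ k, p k ∈ Pset) → ∀ (k : ℕ) (e : Fin nx → ℝ),
      a₁ * (e ⬝ᵥ e) ≤ e ⬝ᵥ ((∑ i, ξ i (p k) • Pbar i) *ᵥ e) ∧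
      e ⬝ᵥ ((∑ i, ξ i (p k) • Pbar i) *ᵥ e) ≤ a₂ * (e ⬝ᵥ e))
    (hdec : ∀ p : ℕ → (Fin np → ℝ), (∀ k, p k ∈ Pset) → ∀ (k : ℕ) (e : Fin nx → ℝ),
      ((((∑ i, ξ i (p k) • A i) + L k p * C) *ᵥ e) ⬝ᵥ
          ((∑ i, ξ i (p (k + 1)) • Pbar i) *ᵥ (((∑ i, ξ i (p k) • A i) + L k p * C) *ᵥ e)))
        ≤ e ⬝ᵥ ((∑ i, ξ i (p k) • Pbar i) *ᵥ e) - a₃ * (e ⬝ᵥ e)) :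
    ∃ Qbar : Fin N → Matrix (Fin nx) (Fin nx) ℝ,
      (∀ i, (Qbar i).PosDef) ∧
      ∀ i j, (Qbar i - (A i)ᵀ * Qbar j * A i + Cᵀ * C).PosDef := by
  classical
  rcases Nat.eq_zero_or_pos N with hN | hN
  · subst hN
    exact ⟨fun i => i.elim0, fun i => i.elim0, fun i => i.elim0⟩
  choose π hπmem hπval using hstrict
  -- vertex evaluation of the polytopic sums
  have hvert : ∀ (i : Fin N) (X : Fin N → Matrix (Fin nx) (Fin nx) ℝ),
      ∑ i', ξ i' (π i) • X i' = X i := by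
    intro i X
    calc ∑ i', ξ i' (π i) • X i' = ∑ i', (if i' = i then (1:ℝ) else 0) • X i' := by
          refine Finset.sum_congr rfl fun i' _ => ?_
          rw [hπval i i']
      _ = X i := by simp [ite_smul]
  -- positive definiteness of each Pbar i
  have hPD : ∀ (i : Fin N) (x : Fin nx → ℝ), a₁ * (x ⬝ᵥ x) ≤ x ⬝ᵥ (Pbar i *ᵥ x) := by
    intro i x
    have := (hbounds (fun _ => π i) (fun _ => hπmem i) 0 x).1
    rwa [hvert i Pbar] at this
  -- the decrease condition on the kernel of C, at each pair of vertices
  have hM : ∀ (i j : Fin N) (x : Fin nx → ℝ), C *ᵥ x = 0 →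
      a₃ * (x ⬝ᵥ x) ≤ x ⬝ᵥ ((Pbar i - (A i)ᵀ * Pbar j * A i) *ᵥ x) := by
    intro i j x hCx
    set p : ℕ → (Fin np → ℝ) := fun k => if k = 0 then π i else π j with hpdef
    have hp : ∀ k, p k ∈ Pset := by
      intro k
      by_cases hk : k = 0 <;> simp [hpdef, hk, hπmem i, hπmem j]
    have hd := hdec p hp 0 x
    have hp0 : p 0 = π i := rfl
    have hp1 : p 1 = π j := rfl
    rw [hp0, hp1, hvert i A, hvert i Pbar, hvert j Pbar] at hd
    have hAL : (A i + L 0 p * C) *ᵥ x = A i *ᵥ x := by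
      rw [add_mulVec, ← mulVec_mulVec, hCx, mulVec_zero, add_zero]
    rw [hAL] at hd
    have hform : x ⬝ᵥ ((Pbar i - (A i)ᵀ * Pbar j * A i) *ᵥ x)
        = x ⬝ᵥ (Pbar i *ᵥ x) - (A i *ᵥ x) ⬝ᵥ (Pbar j *ᵥ (A i *ᵥ x)) := by
      rw [sub_mulVec, dotProduct_sub]
      congr 1
      rw [← mulVec_mulVec, ← mulVec_mulVec, dotProduct_mulVec, vecMul_transpose]
    rw [hform]
    linarith
  -- a uniform ε from the key lemma
  have hkey : ∀ i j : Fin N, ∃ ε > 0, ∀ ε' : ℝ, 0 < ε' → ε' ≤ ε → ∀ x : Fin nx → ℝ, x ≠ 0 →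
      0 < ε' * (x ⬝ᵥ ((Pbar i - (A i)ᵀ * Pbar j * A i) *ᵥ x)) + (C *ᵥ x) ⬝ᵥ (C *ᵥ x) :=
    fun i j => key _ C a₃ ha₃ (hM i j)
  choose εf hεfpos hεf using hkey
  haveI : Nonempty (Fin N) := ⟨⟨0, hN⟩⟩
  set ε : ℝ := Finset.univ.inf' Finset.univ_nonempty (fun q : Fin N × Fin N => εf q.1 q.2)
    with hεdef
  have hεpos : 0 < ε := by
    rw [hεdef, Finset.lt_inf'_iff]
    exact fun q _ => hεfpos q.1 q.2
  have hεle : ∀ i j, ε ≤ εf i j := fun i j =>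
    Finset.inf'_le _ (Finset.mem_univ ((i, j) : Fin N × Fin N))
  have hPe : ∀ i, (Pbar i)ᵀ = Pbar i := fun i => hPsym i
  have hstar : ∀ x : Fin nx → ℝ, star x = x := fun x => funext fun i => rfl
  have hdpos : ∀ x : Fin nx → ℝ, x ≠ 0 → 0 < x ⬝ᵥ x := fun x hx =>
    lt_of_le_of_ne (dp_self_nonneg x) (fun hc => hx (dotProduct_self_eq_zero.mp hc.symm))
  have hsymm : ∀ X : Matrix (Fin nx) (Fin nx) ℝ, Xᵀ = X → X.IsHermitian := fun X hX => by
    show Xᴴ = X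
    rw [conjTranspose_eq_transpose_of_trivial, hX]
  refine ⟨fun i => ε • Pbar i, ?_, ?_⟩
  · intro i
    rw [posDef_iff_dotProduct_mulVec]
    constructor
    · exact hsymm _ (by rw [transpose_smul, hPe i])
    · intro x hx
      rw [hstar x, smul_mulVec, dotProduct_smul, smul_eq_mul]
      have h1 := hPD i x
      have h2 := hdpos x hx
      exact mul_pos hεpos (lt_of_lt_of_le (mul_pos ha₁ h2) h1)
  · intro i j
    rw [posDef_iff_dotProduct_mulVec]
    constructor
    · exact hsymm _ (by
        simp [transpose_add, transpose_sub, transpose_smul, transpose_mul,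
          transpose_transpose, hPe i, hPe j, Matrix.mul_assoc, Matrix.mul_smul,
          Matrix.smul_mul])
    · intro x hx
      rw [hstar x]
      have hrw : (ε • Pbar i - (A i)ᵀ * (ε • Pbar j) * A i + Cᵀ * C)
          = ε • (Pbar i - (A i)ᵀ * Pbar j * A i) + Cᵀ * C := by
        rw [smul_sub]
        congr 2
        rw [Matrix.mul_smul, Matrix.smul_mul]
      rw [hrw, add_mulVec, dotProduct_add, smul_mulVec, dotProduct_smul, smul_eq_mul]
      have hCform : x ⬝ᵥ ((Cᵀ * C) *ᵥ x) = (C *ᵥ x) ⬝ᵥ (C *ᵥ x) := by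
        rw [← mulVec_mulVec, dotProduct_mulVec, vecMul_transpose]
      rw [hCform]
      exact hεf i j ε hεpos (hεle i j) x hx
end

section
/- Let P and Q be real symmetric positive-definite n×n matrices, A a real n×n matrix and C a real m×n matrix. Then P − AᵀQA + CᵀC ≻ 0 if and only if Q⁻¹ − A(P + CᵀC)⁻¹Aᵀ ≻ 0. -/
open Matrix

private lemma key_s3 {p q : ℕ} {X : Matrix (Fin p) (Fin p) ℝ} {Y : Matrix (Fin q) (Fin q) ℝ}
    (B : Matrix (Fin q) (Fin p) ℝ) (hX : X.PosDef) (hY : Y.PosDef)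
    (h : (X - Bᵀ * Y * B).PosDef) : (Y⁻¹ - B * X⁻¹ * Bᵀ).PosDef := by
  haveI := hX.isUnit.invertible
  haveI := hY.isUnit.invertible
  have hB2 : Bᴴ = Bᵀ := by ext i j; simp
  refine PosDef.of_dotProduct_mulVec_pos ?_ ?_
  · have h1 := isHermitian_mul_mul_conjTranspose B hX.inv.1
    rw [hB2] at h1
    exact hY.inv.1.sub h1
  · intro y hy
    set x : Fin p → ℝ := -((X⁻¹ * Bᵀ) *ᵥ y) with hxdef
    have e1 := schur_complement_eq₁₁ (A := X) Bᵀ Y⁻¹ x y hX.1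
    have e2 := schur_complement_eq₂₂ (A := X) (D := Y⁻¹) Bᵀ x y hY.inv.1
    have hBt : (Bᵀ)ᴴ = B := by ext i j; simp
    rw [hBt] at e1 e2
    have hx0 : x + (X⁻¹ * Bᵀ) *ᵥ y = 0 := by rw [hxdef]; exact neg_add_cancel _
    rw [hx0] at e1
    have hYinv : (Y⁻¹)⁻¹ = Y := inv_inv_of_invertible Y
    rw [hYinv] at e2
    set w : Fin q → ℝ := (Y * B) *ᵥ x + y with hwdef
    have key_eq : star y ᵥ* (Y⁻¹ - B * X⁻¹ * Bᵀ) ⬝ᵥ y =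
        star w ᵥ* Y⁻¹ ⬝ᵥ w + star x ᵥ* (X - Bᵀ * Y * B) ⬝ᵥ x := by
      rw [← e2, e1]; simp
    rw [dotProduct_mulVec, key_eq]
    by_cases hx : x = 0
    · have hw : w = y := by rw [hwdef, hx]; simp
      have hpos : 0 < star w ᵥ* Y⁻¹ ⬝ᵥ w := by
        rw [← dotProduct_mulVec, hw]; exact hY.inv.dotProduct_mulVec_pos hy
      have hzero : star x ᵥ* (X - Bᵀ * Y * B) ⬝ᵥ x = 0 := by
        rw [hx]; simp
      rw [hzero]; linarith
    · have h1 : 0 ≤ star w ᵥ* Y⁻¹ ⬝ᵥ w := by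
        rw [← dotProduct_mulVec]; exact hY.inv.posSemidef.dotProduct_mulVec_nonneg w
      have h2 : 0 < star x ᵥ* (X - Bᵀ * Y * B) ⬝ᵥ x := by
        rw [← dotProduct_mulVec]; exact h.dotProduct_mulVec_pos hx
      linarith

/-- For symmetric positive definite `P, Q`:
`P − AᵀQA + CᵀC ≻ 0 ↔ Q⁻¹ − A(P + CᵀC)⁻¹Aᵀ ≻ 0`. -/
theorem stmt_3 {n m : ℕ} (P Q A : Matrix (Fin n) (Fin n) ℝ)
    (C : Matrix (Fin m) (Fin n) ℝ)
    (hP : P.PosDef) (hQ : Q.PosDef) :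
    (P - Aᵀ * Q * A + Cᵀ * C).PosDef ↔ (Q⁻¹ - A * (P + Cᵀ * C)⁻¹ * Aᵀ).PosDef := by
  have hCtC : (Cᵀ * C).PosSemidef := by
    have := posSemidef_conjTranspose_mul_self C
    simpa using this
  have hS : (P + Cᵀ * C).PosDef := hP.add_posSemidef hCtC
  have habel : P + Cᵀ * C - Aᵀ * Q * A = P - Aᵀ * Q * A + Cᵀ * C := by abel
  constructor
  · intro h
    exact key_s3 A hS hQ (by rwa [habel])
  · intro h
    haveI := hS.isUnit.invertible
    haveI := hQ.isUnit.invertible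
    have h' : ((Q⁻¹) - Aᵀᵀ * (P + Cᵀ * C)⁻¹ * Aᵀ).PosDef := by
      rwa [transpose_transpose]
    have := key_s3 Aᵀ hQ.inv hS.inv h'
    rw [inv_inv_of_invertible, inv_inv_of_invertible, transpose_transpose] at this
    rwa [habel] at this
end

section
/- Let S and S₊ be real symmetric positive-definite n×n matrices, A a real n×n matrix and B a real n×m matrix such that S₊ − ASAᵀ + BBᵀ ≻ 0. Define K := −Bᵀ(S₊ + BBᵀ)⁻¹A. Then S⁻¹ − (A + BK)ᵀ S₊⁻¹ (A + BK) ≻ 0. -/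
open Matrix

private lemma real_ct {k l : Type*} (M : Matrix k l ℝ) : Mᴴ = Mᵀ := by
  ext i j; simp [conjTranspose_apply]

private lemma posDef_of_posSemidef_det_ne_zero {n : ℕ} {M : Matrix (Fin n) (Fin n) ℝ}
    (h : M.PosSemidef) (hd : M.det ≠ 0) : M.PosDef := by
  refine posDef_iff_dotProduct_mulVec.mpr ⟨h.1, fun x hx => ?_⟩
  rcases (h.dotProduct_mulVec_nonneg x).lt_or_eq with hlt | heq
  · exact hlt
  · exact absurd (Matrix.eq_zero_of_mulVec_eq_zero hd
      ((h.dotProduct_mulVec_zero_iff x).mp heq.symm)) hx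

/-- If `S, S₊ ≻ 0` are symmetric, `S₊ − ASAᵀ + BBᵀ ≻ 0`, and
`K := −Bᵀ(S₊ + BBᵀ)⁻¹A`, then `S⁻¹ − (A + BK)ᵀS₊⁻¹(A + BK) ≻ 0`. -/
theorem stmt_5 {n m : ℕ} (S Splus A : Matrix (Fin n) (Fin n) ℝ)
    (B : Matrix (Fin n) (Fin m) ℝ)
    (hS : S.PosDef) (hSplus : Splus.PosDef)
    (h : (Splus - A * S * Aᵀ + B * Bᵀ).PosDef) :
    ∀ K : Matrix (Fin m) (Fin n) ℝ, K = -(Bᵀ * (Splus + B * Bᵀ)⁻¹ * A) →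
      (S⁻¹ - (A + B * K)ᵀ * Splus⁻¹ * (A + B * K)).PosDef := by
  rintro K rfl
  set T := Splus + B * Bᵀ with hTdef
  have hBBT : (B * Bᵀ).PosSemidef := by
    have := posSemidef_self_mul_conjTranspose B
    rwa [real_ct] at this
  have hT : T.PosDef := hSplus.add_posSemidef hBBT
  have hSi : (S⁻¹).PosDef := hS.inv
  haveI : Invertible T := hT.isUnit.invertible
  haveI : Invertible (S⁻¹) := hSi.isUnit.invertible
  have hTsymm : Tᵀ = T := by
    have := hT.isHermitian; rwa [IsHermitian, real_ct] at this
  have hPsymm : Splusᵀ = Splus := by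
    have := hSplus.isHermitian; rwa [IsHermitian, real_ct] at this
  have hSd : IsUnit S.det := hS.det_pos.ne'.isUnit
  have hTd : IsUnit T.det := hT.det_pos.ne'.isUnit
  have hPd : IsUnit Splus.det := hSplus.det_pos.ne'.isUnit
  -- the Schur-complement hypothesis
  have hSchur : (T - A * S * Aᵀ).PosDef := by
    have : T - A * S * Aᵀ = Splus - A * S * Aᵀ + B * Bᵀ := by rw [hTdef]; abel
    rw [this]; exact h
  -- block matrix
  have hM : (fromBlocks S⁻¹ Aᵀ (Aᵀ)ᴴ T).PosSemidef := by
    rw [PosDef.fromBlocks₁₁ _ _ hSi, real_ct, transpose_transpose,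
      Matrix.nonsing_inv_nonsing_inv S hSd]
    exact hSchur.posSemidef
  have hkey0 : (S⁻¹ - Aᵀ * T⁻¹ * (Aᵀ)ᴴ).PosSemidef := by
    rwa [PosDef.fromBlocks₂₂ _ _ hT] at hM
  have hkey0' : (S⁻¹ - Aᵀ * T⁻¹ * A).PosSemidef := by
    rwa [real_ct, transpose_transpose] at hkey0
  -- determinant of the block matrix
  have hdet : (fromBlocks S⁻¹ Aᵀ (Aᵀ)ᴴ T).det ≠ 0 := by
    rw [det_fromBlocks₁₁, invOf_eq_nonsing_inv, real_ct, transpose_transpose,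
      Matrix.nonsing_inv_nonsing_inv S hSd]
    exact (mul_pos hSi.det_pos hSchur.det_pos).ne'
  have hkeydet : (S⁻¹ - Aᵀ * T⁻¹ * A).det ≠ 0 := by
    rw [det_fromBlocks₂₂, invOf_eq_nonsing_inv, real_ct, transpose_transpose] at hdet
    intro h0
    rw [h0, mul_zero] at hdet
    exact hdet rfl
  have hkey : (S⁻¹ - Aᵀ * T⁻¹ * A).PosDef := posDef_of_posSemidef_det_ne_zero hkey0' hkeydet
  -- closed-loop algebra
  have hTinv : T⁻¹ᵀ = T⁻¹ := by
    rw [Matrix.transpose_nonsing_inv, hTsymm]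
  have hP : Splus = T - B * Bᵀ := by rw [hTdef, add_sub_cancel_right]
  have hAcl : A + B * -(Bᵀ * T⁻¹ * A) = Splus * T⁻¹ * A := by
    rw [hP, Matrix.sub_mul, Matrix.sub_mul, Matrix.mul_nonsing_inv _ hTd, Matrix.one_mul]
    simp [Matrix.mul_assoc, sub_eq_add_neg]
  rw [hAcl]
  have hsp : Splus * (T⁻¹ * A) = A - B * (Bᵀ * (T⁻¹ * A)) := by
    rw [hP, Matrix.sub_mul, Matrix.mul_nonsing_inv_cancel_left _ _ hTd, Matrix.mul_assoc]
  have hmid : (Splus * T⁻¹ * A)ᵀ * Splus⁻¹ * (Splus * T⁻¹ * A)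
      = Aᵀ * T⁻¹ * A - (Bᵀ * T⁻¹ * A)ᵀ * (Bᵀ * T⁻¹ * A) := by
    rw [Matrix.transpose_mul, Matrix.transpose_mul, hTinv, hPsymm]
    calc Aᵀ * (T⁻¹ * Splus) * Splus⁻¹ * (Splus * T⁻¹ * A)
        = Aᵀ * T⁻¹ * (Splus * (T⁻¹ * A)) := by
          simp only [Matrix.mul_assoc]
          rw [Matrix.nonsing_inv_mul_cancel_left _ _ hPd]
      _ = Aᵀ * T⁻¹ * A - (Bᵀ * T⁻¹ * A)ᵀ * (Bᵀ * T⁻¹ * A) := by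
          rw [hsp, Matrix.mul_sub, Matrix.transpose_mul, Matrix.transpose_mul, hTinv,
            transpose_transpose]
          simp only [Matrix.mul_assoc]
  rw [hmid]
  have hC : ((Bᵀ * T⁻¹ * A)ᵀ * (Bᵀ * T⁻¹ * A)).PosSemidef := by
    have := posSemidef_conjTranspose_mul_self (Bᵀ * T⁻¹ * A)
    rwa [real_ct] at this
  have : S⁻¹ - (Aᵀ * T⁻¹ * A - (Bᵀ * T⁻¹ * A)ᵀ * (Bᵀ * T⁻¹ * A))
      = (S⁻¹ - Aᵀ * T⁻¹ * A) + (Bᵀ * T⁻¹ * A)ᵀ * (Bᵀ * T⁻¹ * A) := by abel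
  rw [this]
  exact hkey.add_posSemidef hC
end

section
/- Consider the polytopic setup: a compact set ℙ ⊆ ℝ^{n_p}, continuous functions ξ_i : ℙ → ℝ_{≥0}, i = 1,…,N, with ∑_{i=1}^N ξ_i(π) = 1 for all π ∈ ℙ, matrices A_i ∈ ℝ^{n_x×n_x} and B ∈ ℝ^{n_x×n_u}, and A(π) := ∑_i ξ_i(π)A_i. Assume strict polytopicity: for each i ∈ {1,…,N} there exists π_i ∈ ℙ with ξ_j(π_i) = 1 if j = i and 0 otherwise. Suppose the system is poly-Q stabilizable, i.e., there exist a map K : ℕ × (ℕ → ℙ) → ℝ^{n_u×n_x}, symmetric matrices P̄_i ∈ ℝ^{n_x×n_x} with P(π) := ∑_i ξ_i(π)P̄_i, and constants a₁,a₂,a₃ > 0 such that for every sequence p : ℕ → ℙ, every k ∈ ℕ and every x ∈ ℝ^{n_x}: a₁‖x‖² ≤ xᵀP(p_k)x ≤ a₂‖x‖², and with x₊ := (A(p_k) + BK(k,p))x it holds that x₊ᵀP(p_{k+1})x₊ ≤ xᵀP(p_k)x − a₃‖x‖². Then there exist symmetric positive-definite matrices S̄_i ∈ ℝ^{n_x×n_x},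 i = 1,…,N, such that S̄_j − A_iS̄_iA_iᵀ + BBᵀ ≻ 0 for all i,j ∈ {1,…,N}. -/
open Matrix

section Helpers

variable {n m : ℕ}

private lemma dotSymm (M : Matrix (Fin n) (Fin n) ℝ) (hsym : Mᵀ = M) (v w : Fin n → ℝ) :
    v ⬝ᵥ M *ᵥ w = w ⬝ᵥ M *ᵥ v := by
  rw [dotProduct_mulVec, ← mulVec_transpose, hsym, dotProduct_comm]

private lemma dot_self_nonneg (v : Fin n → ℝ) : 0 ≤ v ⬝ᵥ v :=
  Finset.sum_nonneg fun i _ => mul_self_nonneg (v i)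

private lemma dot_self_pos {v : Fin n → ℝ} (hv : v ≠ 0) : 0 < v ⬝ᵥ v := by
  obtain ⟨i, hi⟩ := Function.ne_iff.mp hv
  have h1 : v i * v i ≤ v ⬝ᵥ v :=
    Finset.single_le_sum (fun j _ => mul_self_nonneg (v j)) (Finset.mem_univ i)
  exact lt_of_lt_of_le (mul_self_pos.mpr hi) h1

private lemma cs_dot (y z : Fin n → ℝ) : (y ⬝ᵥ z)^2 ≤ (y ⬝ᵥ y) * (z ⬝ᵥ z) := by
  have h := Finset.sum_mul_sq_le_sq_mul_sq Finset.univ y z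
  simpa [dotProduct, pow_two] using h

private lemma cs_quad (M : Matrix (Fin n) (Fin n) ℝ) (hsym : Mᵀ = M)
    (hpsd : ∀ v, 0 ≤ v ⬝ᵥ M *ᵥ v) (y w : Fin n → ℝ) :
    (y ⬝ᵥ M *ᵥ w) ^ 2 ≤ (y ⬝ᵥ M *ᵥ y) * (w ⬝ᵥ M *ᵥ w) := by
  have key : ∀ s : ℝ, 0 ≤ (w ⬝ᵥ M *ᵥ w) * (s * s) + (2 * (y ⬝ᵥ M *ᵥ w)) * s + y ⬝ᵥ M *ᵥ y := by
    intro s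
    have h := hpsd (y + s • w)
    have hsw : w ⬝ᵥ M *ᵥ y = y ⬝ᵥ M *ᵥ w := dotSymm M hsym w y
    simp only [mulVec_add, mulVec_smul, dotProduct_add, add_dotProduct,
      dotProduct_smul, smul_dotProduct, smul_eq_mul, hsw] at h
    nlinarith [h]
  have hd := discrim_le_zero key
  rw [discrim] at hd
  nlinarith [hd]

private lemma young (M : Matrix (Fin n) (Fin n) ℝ) (hsym : Mᵀ = M)
    (hpsd : ∀ v, 0 ≤ v ⬝ᵥ M *ᵥ v) (u r : Fin n → ℝ) {δ : ℝ} (hδ : 0 < δ) :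
    (u - r) ⬝ᵥ M *ᵥ (u - r) ≤ (1 + δ) * (u ⬝ᵥ M *ᵥ u) + (1 + 1/δ) * (r ⬝ᵥ M *ᵥ r) := by
  have hkey : δ * ((u - r) ⬝ᵥ M *ᵥ (u - r))
      ≤ δ * ((1 + δ) * (u ⬝ᵥ M *ᵥ u)) + (1 + δ) * (r ⬝ᵥ M *ᵥ r) := by
    have h := hpsd (δ • u + r)
    have hsw : r ⬝ᵥ M *ᵥ u = u ⬝ᵥ M *ᵥ r := dotSymm M hsym r u
    simp only [mulVec_add, mulVec_sub, mulVec_smul, dotProduct_add, add_dotProduct,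
      dotProduct_sub, sub_dotProduct, dotProduct_smul, smul_dotProduct, smul_eq_mul, hsw] at h ⊢
    nlinarith [h]
  have hre : δ * ((1 + δ) * (u ⬝ᵥ M *ᵥ u)) + (1 + δ) * (r ⬝ᵥ M *ᵥ r)
      = δ * ((1 + δ) * (u ⬝ᵥ M *ᵥ u) + (1 + 1/δ) * (r ⬝ᵥ M *ᵥ r)) := by
    field_simp
    ring
  rw [hre] at hkey
  exact (mul_le_mul_iff_right₀ hδ).mp hkey

private lemma frob (K : Matrix (Fin n) (Fin m) ℝ) (v : Fin m → ℝ) :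
    (K *ᵥ v) ⬝ᵥ (K *ᵥ v) ≤ (∑ i, ∑ j, (K i j)^2) * (v ⬝ᵥ v) := by
  have hv : v ⬝ᵥ v = ∑ j, (v j)^2 := by simp [dotProduct, pow_two]
  have h1 : ∀ i, ((K *ᵥ v) i)^2 ≤ (∑ j, (K i j)^2) * (∑ j, (v j)^2) := by
    intro i
    have h := Finset.sum_mul_sq_le_sq_mul_sq Finset.univ (fun j => K i j) v
    simpa [Matrix.mulVec, dotProduct] using h
  calc (K *ᵥ v) ⬝ᵥ (K *ᵥ v) = ∑ i, ((K *ᵥ v) i)^2 := by simp [dotProduct, pow_two]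
    _ ≤ ∑ i, (∑ j, (K i j)^2) * (∑ j, (v j)^2) := Finset.sum_le_sum (fun i _ => h1 i)
    _ = (∑ i, ∑ j, (K i j)^2) * (v ⬝ᵥ v) := by rw [← Finset.sum_mul, hv]

private lemma posdef_of (M : Matrix (Fin n) (Fin n) ℝ) (h : Mᵀ = M)
    (hp : ∀ x : Fin n → ℝ, x ≠ 0 → 0 < x ⬝ᵥ M *ᵥ x) : M.PosDef := by
  rw [posDef_iff_dotProduct_mulVec]
  constructor
  · unfold Matrix.IsHermitian
    ext i j
    simp [Matrix.conjTranspose]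
    exact congrFun (congrFun h i) j
  · intro x hx
    simpa [dotProduct] using hp x hx

private lemma inv_form_bounds (P : Matrix (Fin n) (Fin n) ℝ)
    (hPQ : P * P⁻¹ = 1) (hQsym : (P⁻¹)ᵀ = P⁻¹) (hPsym : Pᵀ = P)
    {a₁ a₂ : ℝ} (ha₁ : 0 < a₁) (ha₂ : 0 < a₂)
    (hlo : ∀ x, a₁ * (x ⬝ᵥ x) ≤ x ⬝ᵥ P *ᵥ x)
    (hhi : ∀ x, x ⬝ᵥ P *ᵥ x ≤ a₂ * (x ⬝ᵥ x)) (y : Fin n → ℝ) :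
    (1/a₂) * (y ⬝ᵥ y) ≤ y ⬝ᵥ P⁻¹ *ᵥ y ∧ y ⬝ᵥ P⁻¹ *ᵥ y ≤ (1/a₁) * (y ⬝ᵥ y) := by
  set z := P⁻¹ *ᵥ y with hz
  have hPz : P *ᵥ z = y := by rw [hz, mulVec_mulVec, hPQ, one_mulVec]
  have hq : y ⬝ᵥ z = z ⬝ᵥ P *ᵥ z := by rw [hPz, dotProduct_comm]
  have hqnn : 0 ≤ y ⬝ᵥ z := by
    rw [hq]; exact le_trans (mul_nonneg ha₁.le (dot_self_nonneg z)) (hlo z)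
  have psdP : ∀ v, 0 ≤ v ⬝ᵥ P *ᵥ v :=
    fun v => le_trans (mul_nonneg ha₁.le (dot_self_nonneg v)) (hlo v)
  constructor
  · rcases (dot_self_nonneg y).eq_or_lt with h0 | hyy
    · rw [← h0, mul_zero]; exact hqnn
    · have hyPz : y ⬝ᵥ P *ᵥ z = y ⬝ᵥ y := by rw [hPz]
      have cs := cs_quad P hPsym psdP y z
      rw [hyPz, ← hq] at cs
      have hy2 := hhi y
      have t1 := mul_le_mul_of_nonneg_right hy2 hqnn
      have key : (y ⬝ᵥ y) * (y ⬝ᵥ y) ≤ (a₂ * (y ⬝ᵥ z)) * (y ⬝ᵥ y) := by nlinarith [cs, t1]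
      have key2 : y ⬝ᵥ y ≤ a₂ * (y ⬝ᵥ z) := le_of_mul_le_mul_right key hyy
      calc (1/a₂) * (y ⬝ᵥ y) ≤ (1/a₂) * (a₂ * (y ⬝ᵥ z)) :=
            mul_le_mul_of_nonneg_left key2 (by positivity)
        _ = y ⬝ᵥ z := by field_simp
  · rcases hqnn.eq_or_lt with h0 | hqpos
    · rw [← h0]; exact mul_nonneg (by positivity) (dot_self_nonneg y)
    · have cs := cs_dot y z
      have hzz : a₁ * (z ⬝ᵥ z) ≤ y ⬝ᵥ z := by rw [hq]; exact hlo z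
      have hzz2 : z ⬝ᵥ z ≤ (1/a₁) * (y ⬝ᵥ z) := by
        calc z ⬝ᵥ z = (1/a₁) * (a₁ * (z ⬝ᵥ z)) := by field_simp
          _ ≤ (1/a₁) * (y ⬝ᵥ z) := mul_le_mul_of_nonneg_left hzz (by positivity)
      have t2 := mul_le_mul_of_nonneg_left hzz2 (dot_self_nonneg y)
      have key : (y ⬝ᵥ z) * (y ⬝ᵥ z) ≤ ((1/a₁) * (y ⬝ᵥ y)) * (y ⬝ᵥ z) := by
        nlinarith [cs, t2]
      exact le_of_mul_le_mul_right key hqpos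

private lemma dual_step (Pi Qi Pj Qj M : Matrix (Fin n) (Fin n) ℝ)
    (hPiQi : Pi * Qi = 1) (hPjQj : Pj * Qj = 1)
    (hPisym : Piᵀ = Pi) (hPjsym : Pjᵀ = Pj)
    {a₁ a₂ a₃ : ℝ} (ha₁ : 0 < a₁) (ha₂ : 0 < a₂) (ha₃ : 0 < a₃) (ha32 : a₃ ≤ a₂)
    (hloi : ∀ x, a₁ * (x ⬝ᵥ x) ≤ x ⬝ᵥ Pi *ᵥ x) (hhii : ∀ x, x ⬝ᵥ Pi *ᵥ x ≤ a₂ * (x ⬝ᵥ x))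
    (hloj : ∀ x, a₁ * (x ⬝ᵥ x) ≤ x ⬝ᵥ Pj *ᵥ x)
    (hQjlo : ∀ v, (1/a₂) * (v ⬝ᵥ v) ≤ v ⬝ᵥ Qj *ᵥ v)
    (hdec : ∀ x, (M *ᵥ x) ⬝ᵥ Pj *ᵥ (M *ᵥ x) ≤ x ⬝ᵥ Pi *ᵥ x - a₃ * (x ⬝ᵥ x))
    (y : Fin n → ℝ) :
    (Mᵀ *ᵥ y) ⬝ᵥ Qi *ᵥ (Mᵀ *ᵥ y) ≤ y ⬝ᵥ Qj *ᵥ y - (a₃/a₂^2) * (y ⬝ᵥ y) := by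
  have psdj : ∀ v, 0 ≤ v ⬝ᵥ Pj *ᵥ v :=
    fun v => le_trans (mul_nonneg ha₁.le (dot_self_nonneg v)) (hloj v)
  set u := Mᵀ *ᵥ y with hu
  set x := Qi *ᵥ u with hx
  have hPx : Pi *ᵥ x = u := by rw [hx, mulVec_mulVec, hPiQi, one_mulVec]
  have ht : u ⬝ᵥ x = x ⬝ᵥ Pi *ᵥ x := by rw [hPx, dotProduct_comm]
  have hyw : y ⬝ᵥ (M *ᵥ x) = u ⬝ᵥ x := by
    rw [dotProduct_mulVec, ← mulVec_transpose, ← hu]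
  have key := cs_quad Pj hPjsym psdj (Qj *ᵥ y) (M *ᵥ x)
  have e1 : (Qj *ᵥ y) ⬝ᵥ Pj *ᵥ (M *ᵥ x) = u ⬝ᵥ x := by
    rw [dotProduct_mulVec, ← mulVec_transpose, hPjsym, mulVec_mulVec, hPjQj, one_mulVec, hyw]
  have e2 : (Qj *ᵥ y) ⬝ᵥ Pj *ᵥ (Qj *ᵥ y) = y ⬝ᵥ Qj *ᵥ y := by
    rw [dotProduct_mulVec, ← mulVec_transpose, hPjsym, mulVec_mulVec, hPjQj, one_mulVec]
  rw [e1, e2] at key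
  have hdx := hdec x
  rw [← ht] at hdx
  have hhx : u ⬝ᵥ x ≤ a₂ * (x ⬝ᵥ x) := by rw [ht]; exact hhii x
  have htnn : 0 ≤ u ⬝ᵥ x := by
    rw [ht]; exact le_trans (mul_nonneg ha₁.le (dot_self_nonneg x)) (hloi x)
  have hqjlo := hQjlo y
  have hqjnn : 0 ≤ y ⬝ᵥ Qj *ᵥ y :=
    le_trans (mul_nonneg (by positivity) (dot_self_nonneg y)) hqjlo
  have hratio : a₃ / a₂^2 ≤ 1 / a₂ := by
    rw [div_le_div_iff₀ (by positivity) ha₂]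
    nlinarith
  rcases htnn.eq_or_lt with h0 | htpos
  · have hr : (a₃/a₂^2) * (y ⬝ᵥ y) ≤ (1/a₂) * (y ⬝ᵥ y) :=
      mul_le_mul_of_nonneg_right hratio (dot_self_nonneg y)
    linarith
  · have hxx : (u ⬝ᵥ x) / a₂ ≤ x ⬝ᵥ x := by
      rw [div_le_iff₀ ha₂]
      linarith
    have h5 : (M *ᵥ x) ⬝ᵥ Pj *ᵥ (M *ᵥ x) ≤ (u ⬝ᵥ x) - a₃ * ((u ⬝ᵥ x)/a₂) := by
      have h5a := mul_le_mul_of_nonneg_left hxx ha₃.le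
      linarith
    have h6 : (u ⬝ᵥ x) * (u ⬝ᵥ x) ≤ ((y ⬝ᵥ Qj *ᵥ y) * (1 - a₃/a₂)) * (u ⬝ᵥ x) := by
      have h6a : (u ⬝ᵥ x)^2 ≤ (y ⬝ᵥ Qj *ᵥ y) * ((u ⬝ᵥ x) - a₃ * ((u ⬝ᵥ x)/a₂)) :=
        le_trans key (mul_le_mul_of_nonneg_left h5 hqjnn)
      calc (u ⬝ᵥ x) * (u ⬝ᵥ x) = (u ⬝ᵥ x)^2 := (pow_two _).symm
        _ ≤ (y ⬝ᵥ Qj *ᵥ y) * ((u ⬝ᵥ x) - a₃ * ((u ⬝ᵥ x)/a₂)) := h6a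
        _ = ((y ⬝ᵥ Qj *ᵥ y) * (1 - a₃/a₂)) * (u ⬝ᵥ x) := by ring
    have h7 : u ⬝ᵥ x ≤ (y ⬝ᵥ Qj *ᵥ y) * (1 - a₃/a₂) := le_of_mul_le_mul_right h6 htpos
    have h8 : (a₃/a₂) * ((1/a₂) * (y ⬝ᵥ y)) ≤ (a₃/a₂) * (y ⬝ᵥ Qj *ᵥ y) :=
      mul_le_mul_of_nonneg_left hqjlo (by positivity)
    have h9 : (a₃/a₂) * ((1/a₂) * (y ⬝ᵥ y)) = (a₃/a₂^2) * (y ⬝ᵥ y) := by ring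
    nlinarith [h7, h8, h9]

end Helpers

set_option maxHeartbeats 1000000

/-- Corollary 1: If the strictly polytopic system is poly-Q stabilizable
(there is a feedback gain `K(k,p)` and a poly-quadratic Lyapunov function
`V(π,x) = xᵀP(π)x` for the closed loop `x₊ = (A(p_k) + BK(k,p))x`), then there exist
symmetric positive definite `S̄ᵢ` with `S̄ⱼ − AᵢS̄ᵢAᵢᵀ + BBᵀ ≻ 0` for all `i, j`. -/
theorem stmt_8 {np nx nu N : ℕ} (Pset : Set (Fin np → ℝ)) (hcomp : IsCompact Pset)
    (ξ : Fin N → (Fin np → ℝ) → ℝ)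
    (hcont : ∀ i, ContinuousOn (ξ i) Pset)
    (hnonneg : ∀ i, ∀ π ∈ Pset, 0 ≤ ξ i π)
    (hsum : ∀ π ∈ Pset, ∑ i, ξ i π = 1)
    (A : Fin N → Matrix (Fin nx) (Fin nx) ℝ)
    (B : Matrix (Fin nx) (Fin nu) ℝ)
    (hstrict : ∀ i, ∃ π ∈ Pset, ∀ j, ξ j π = if j = i then 1 else 0)
    (K : ℕ → (ℕ → (Fin np → ℝ)) → Matrix (Fin nu) (Fin nx) ℝ)
    (Pbar : Fin N → Matrix (Fin nx) (Fin nx) ℝ)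
    (hPsym : ∀ i, (Pbar i).IsSymm)
    (a₁ a₂ a₃ : ℝ) (ha₁ : 0 < a₁) (ha₂ : 0 < a₂) (ha₃ : 0 < a₃)
    (hbounds : ∀ p : ℕ → (Fin np → ℝ), (∀ k, p k ∈ Pset) → ∀ (k : ℕ) (x : Fin nx → ℝ),
      a₁ * (x ⬝ᵥ x) ≤ x ⬝ᵥ ((∑ i, ξ i (p k) • Pbar i) *ᵥ x) ∧
      x ⬝ᵥ ((∑ i, ξ i (p k) • Pbar i) *ᵥ x) ≤ a₂ * (x ⬝ᵥ x))
    (hdec : ∀ p : ℕ → (Fin np → ℝ), (∀ k, p k ∈ Pset) → ∀ (k : ℕ) (x : Fin nx → ℝ),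
      ((((∑ i, ξ i (p k) • A i) + B * K k p) *ᵥ x) ⬝ᵥ
          ((∑ i, ξ i (p (k + 1)) • Pbar i) *ᵥ (((∑ i, ξ i (p k) • A i) + B * K k p) *ᵥ x)))
        ≤ x ⬝ᵥ ((∑ i, ξ i (p k) • Pbar i) *ᵥ x) - a₃ * (x ⬝ᵥ x)) :
    ∃ Sbar : Fin N → Matrix (Fin nx) (Fin nx) ℝ,
      (∀ i, (Sbar i).PosDef) ∧
      ∀ i j, (Sbar j - A i * Sbar i * (A i)ᵀ + B * Bᵀ).PosDef := by
  rcases Nat.eq_zero_or_pos N with hN | hN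
  · subst hN
    exact ⟨fun i => i.elim0, fun i => i.elim0, fun i => i.elim0⟩
  rcases Nat.eq_zero_or_pos nx with hnx | hnx
  · subst hnx
    refine ⟨fun _ => 1, fun i => ?_, fun i j => ?_⟩ <;>
      exact ⟨Subsingleton.elim _ _, fun x hx => absurd (Subsingleton.elim x 0) hx⟩
  -- choose vertices
  choose π hπmem hπval using hstrict
  have hPsymE : ∀ i, (Pbar i)ᵀ = Pbar i := fun i => hPsym i
  have hcoll : ∀ (X : Fin N → Matrix (Fin nx) (Fin nx) ℝ) (i : Fin N),
      (∑ m, ξ m (π i) • X m) = X i := by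
    intro X i
    rw [Finset.sum_eq_single i]
    · rw [hπval i i, if_pos rfl, one_smul]
    · intro b _ hb
      rw [hπval i b, if_neg hb, zero_smul]
    · intro h; exact absurd (Finset.mem_univ i) h
  have F1lo : ∀ (i : Fin N) (x : Fin nx → ℝ), a₁ * (x ⬝ᵥ x) ≤ x ⬝ᵥ Pbar i *ᵥ x := by
    intro i x
    have h := (hbounds (fun _ => π i) (fun _ => hπmem i) 0 x).1
    rwa [hcoll Pbar i] at h
  have F1hi : ∀ (i : Fin N) (x : Fin nx → ℝ), x ⬝ᵥ Pbar i *ᵥ x ≤ a₂ * (x ⬝ᵥ x) := by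
    intro i x
    have h := (hbounds (fun _ => π i) (fun _ => hπmem i) 0 x).2
    rwa [hcoll Pbar i] at h
  have F2' : ∀ i j, ∃ Kij : Matrix (Fin nu) (Fin nx) ℝ, ∀ x : Fin nx → ℝ,
      ((A i + B * Kij) *ᵥ x) ⬝ᵥ Pbar j *ᵥ ((A i + B * Kij) *ᵥ x)
        ≤ x ⬝ᵥ Pbar i *ᵥ x - a₃ * (x ⬝ᵥ x) := by
    intro i j
    refine ⟨K 0 (fun k => if k = 0 then π i else π j), fun x => ?_⟩
    have h := hdec (fun k => if k = 0 then π i else π j)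
      (fun k => by split <;> [exact hπmem i; exact hπmem j]) 0 x
    norm_num at h
    rwa [hcoll A i, hcoll Pbar i, hcoll Pbar j, ← mulVec_mulVec] at h
  choose Km F2 using F2'
  have hpsdP : ∀ (i : Fin N) (v : Fin nx → ℝ), 0 ≤ v ⬝ᵥ Pbar i *ᵥ v :=
    fun i v => le_trans (mul_nonneg ha₁.le (dot_self_nonneg v)) (F1lo i v)
  -- a₃ ≤ a₂
  have hee : (0:ℝ) < (fun _ : Fin nx => (1:ℝ)) ⬝ᵥ (fun _ : Fin nx => (1:ℝ)) := by
    simp only [dotProduct, mul_one, Finset.sum_const, Finset.card_univ, Fintype.card_fin,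
      nsmul_eq_mul]
    exact_mod_cast hnx
  have ha32 : a₃ ≤ a₂ := by
    have h2 := F2 ⟨0, hN⟩ ⟨0, hN⟩ (fun _ => (1:ℝ))
    have h3 := hpsdP ⟨0, hN⟩ ((A ⟨0, hN⟩ + B * Km ⟨0, hN⟩ ⟨0, hN⟩) *ᵥ (fun _ => (1:ℝ)))
    have h4 := F1hi ⟨0, hN⟩ (fun _ => (1:ℝ))
    nlinarith [hee, h2, h3, h4]
  -- positive definiteness and inverses of Pbar
  have hPDi : ∀ i, (Pbar i).PosDef := fun i =>
    posdef_of _ (hPsymE i) (fun x hx =>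
      lt_of_lt_of_le (mul_pos ha₁ (dot_self_pos hx)) (F1lo i x))
  have hdet : ∀ i, IsUnit (Pbar i).det := fun i => (hPDi i).det_pos.ne'.isUnit
  have hPQ : ∀ i, Pbar i * (Pbar i)⁻¹ = 1 := fun i => mul_nonsing_inv _ (hdet i)
  have hQsym : ∀ i, ((Pbar i)⁻¹)ᵀ = (Pbar i)⁻¹ := fun i => by
    rw [transpose_nonsing_inv, hPsymE i]
  have hQb : ∀ (i : Fin N) (y : Fin nx → ℝ),
      (1/a₂) * (y ⬝ᵥ y) ≤ y ⬝ᵥ (Pbar i)⁻¹ *ᵥ y ∧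
      y ⬝ᵥ (Pbar i)⁻¹ *ᵥ y ≤ (1/a₁) * (y ⬝ᵥ y) :=
    fun i => inv_form_bounds (Pbar i) (hPQ i) (hQsym i) (hPsymE i) ha₁ ha₂ (F1lo i) (F1hi i)
  -- constants
  obtain ⟨c, hc_def⟩ : ∃ c : ℝ, c = 1 + ∑ i, ∑ j, ∑ r, ∑ s, ((Km i j)ᵀ r s)^2 := ⟨_, rfl⟩
  have hsum_nn : (0:ℝ) ≤ ∑ i, ∑ j, ∑ r, ∑ s, ((Km i j)ᵀ r s)^2 :=
    Finset.sum_nonneg fun _ _ => Finset.sum_nonneg fun _ _ =>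
      Finset.sum_nonneg fun _ _ => Finset.sum_nonneg fun _ _ => sq_nonneg _
  have hc_pos : 0 < c := by rw [hc_def]; linarith
  have hcb : ∀ i j, (∑ r, ∑ s, ((Km i j)ᵀ r s)^2) ≤ c := by
    intro i j
    rw [hc_def]
    have h1 : (∑ r, ∑ s, ((Km i j)ᵀ r s)^2) ≤ ∑ j', ∑ r, ∑ s, ((Km i j')ᵀ r s)^2 :=
      Finset.single_le_sum (f := fun j' => ∑ r, ∑ s, ((Km i j')ᵀ r s)^2)
        (fun j' _ => Finset.sum_nonneg fun _ _ =>
        Finset.sum_nonneg fun _ _ => sq_nonneg _) (Finset.mem_univ j)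
    have h2 : (∑ j', ∑ r, ∑ s, ((Km i j')ᵀ r s)^2)
        ≤ ∑ i', ∑ j', ∑ r, ∑ s, ((Km i' j')ᵀ r s)^2 :=
      Finset.single_le_sum (f := fun i' => ∑ j', ∑ r, ∑ s, ((Km i' j')ᵀ r s)^2)
        (fun i' _ => Finset.sum_nonneg fun _ _ =>
        Finset.sum_nonneg fun _ _ => Finset.sum_nonneg fun _ _ => sq_nonneg _)
        (Finset.mem_univ i)
    linarith
  obtain ⟨ε, hε_def⟩ : ∃ e : ℝ, e = a₃ / a₂^2 := ⟨_, rfl⟩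
  have hε : 0 < ε := by rw [hε_def]; positivity
  obtain ⟨δ, hδ_def⟩ : ∃ d : ℝ, d = ε * a₁ / 2 := ⟨_, rfl⟩
  have hδ : 0 < δ := by rw [hδ_def]; positivity
  have hδ0 : δ ≠ 0 := hδ.ne'
  have ha₁0 : a₁ ≠ 0 := ha₁.ne'
  have hc0 : c ≠ 0 := hc_pos.ne'
  have h1δ : 0 < 1 + 1/δ := by positivity
  have h1δ0 : 1 + 1/δ ≠ 0 := h1δ.ne'
  obtain ⟨t₀, ht₀_def⟩ : ∃ t : ℝ, t = a₁ / ((1 + 1/δ) * c) := ⟨_, rfl⟩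
  have ht₀ : 0 < t₀ := by rw [ht₀_def]; positivity
  refine ⟨fun i => t₀ • (Pbar i)⁻¹, fun i => ?_, fun i j => ?_⟩
  · -- Sbar i is positive definite
    apply posdef_of
    · rw [transpose_smul, hQsym i]
    · intro x hx
      rw [smul_mulVec, dotProduct_smul, smul_eq_mul]
      have h1 := (hQb i x).1
      have h2 : 0 < (1/a₂) * (x ⬝ᵥ x) := mul_pos (by positivity) (dot_self_pos hx)
      exact mul_pos ht₀ (lt_of_lt_of_le h2 h1)
  · -- main vertex LMI
    have hQipsd : ∀ v : Fin nx → ℝ, 0 ≤ v ⬝ᵥ (Pbar i)⁻¹ *ᵥ v :=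
      fun v => le_trans (mul_nonneg (by positivity) (dot_self_nonneg v)) ((hQb i v).1)
    apply posdef_of
    · simp only [transpose_add, transpose_sub, transpose_smul, transpose_mul,
        transpose_transpose, hQsym i, hQsym j, Matrix.mul_assoc]
    · intro y hy
      have hyy := dot_self_pos hy
      have e1 : y ⬝ᵥ (t₀ • (Pbar j)⁻¹) *ᵥ y = t₀ * (y ⬝ᵥ (Pbar j)⁻¹ *ᵥ y) := by
        rw [smul_mulVec, dotProduct_smul, smul_eq_mul]
      have e2 : y ⬝ᵥ (A i * (t₀ • (Pbar i)⁻¹) * (A i)ᵀ) *ᵥ y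
          = t₀ * (((A i)ᵀ *ᵥ y) ⬝ᵥ (Pbar i)⁻¹ *ᵥ ((A i)ᵀ *ᵥ y)) := by
        rw [← mulVec_mulVec, ← mulVec_mulVec, dotProduct_mulVec, ← mulVec_transpose,
          smul_mulVec, dotProduct_smul, smul_eq_mul]
      have e3 : y ⬝ᵥ (B * Bᵀ) *ᵥ y = (Bᵀ *ᵥ y) ⬝ᵥ (Bᵀ *ᵥ y) := by
        rw [← mulVec_mulVec, dotProduct_mulVec, ← mulVec_transpose]
      have hv : (A i)ᵀ *ᵥ y
          = ((A i + B * Km i j)ᵀ *ᵥ y) - ((Km i j)ᵀ *ᵥ (Bᵀ *ᵥ y)) := by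
        rw [mulVec_mulVec, ← transpose_mul, transpose_add, Matrix.add_mulVec,
          add_sub_cancel_right]
      have hform : y ⬝ᵥ (t₀ • (Pbar j)⁻¹ - A i * (t₀ • (Pbar i)⁻¹) * (A i)ᵀ + B * Bᵀ) *ᵥ y
          = t₀ * (y ⬝ᵥ (Pbar j)⁻¹ *ᵥ y)
            - t₀ * ((((A i + B * Km i j)ᵀ *ᵥ y) - ((Km i j)ᵀ *ᵥ (Bᵀ *ᵥ y))) ⬝ᵥ
                (Pbar i)⁻¹ *ᵥ (((A i + B * Km i j)ᵀ *ᵥ y) - ((Km i j)ᵀ *ᵥ (Bᵀ *ᵥ y))))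
            + (Bᵀ *ᵥ y) ⬝ᵥ (Bᵀ *ᵥ y) := by
        rw [Matrix.add_mulVec, Matrix.sub_mulVec, dotProduct_add, dotProduct_sub,
          e1, e2, hv, e3]
      rw [hform]
      have h_young := young (Pbar i)⁻¹ (hQsym i) hQipsd
        ((A i + B * Km i j)ᵀ *ᵥ y) ((Km i j)ᵀ *ᵥ (Bᵀ *ᵥ y)) hδ
      have h_dual := dual_step (Pbar i) (Pbar i)⁻¹ (Pbar j) (Pbar j)⁻¹ (A i + B * Km i j)
        (hPQ i) (hPQ j) (hPsymE i) (hPsymE j) ha₁ ha₂ ha₃ ha32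
        (F1lo i) (F1hi i) (F1lo j) (fun v => (hQb j v).1) (F2 i j) y
      rw [← hε_def] at h_dual
      have h_r : ((Km i j)ᵀ *ᵥ (Bᵀ *ᵥ y)) ⬝ᵥ (Pbar i)⁻¹ *ᵥ ((Km i j)ᵀ *ᵥ (Bᵀ *ᵥ y))
          ≤ (1/a₁) * (c * ((Bᵀ *ᵥ y) ⬝ᵥ (Bᵀ *ᵥ y))) := by
        have h1 := (hQb i ((Km i j)ᵀ *ᵥ (Bᵀ *ᵥ y))).2
        have h2 := frob ((Km i j)ᵀ) (Bᵀ *ᵥ y)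
        have h3 : (∑ r, ∑ s, ((Km i j)ᵀ r s)^2) * ((Bᵀ *ᵥ y) ⬝ᵥ (Bᵀ *ᵥ y))
            ≤ c * ((Bᵀ *ᵥ y) ⬝ᵥ (Bᵀ *ᵥ y)) :=
          mul_le_mul_of_nonneg_right (hcb i j) (dot_self_nonneg _)
        have h4 := mul_le_mul_of_nonneg_left (le_trans h2 h3)
          (by positivity : (0:ℝ) ≤ 1/a₁)
        linarith
      have h_qj := (hQb j y).2
      have hco : t₀ * ((1 + 1/δ) * ((1/a₁) * c)) = 1 := by
        rw [ht₀_def]; field_simp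
      have hδa : δ * (1/a₁) = ε/2 := by
        rw [hδ_def]; field_simp
      have s1 : (((A i + B * Km i j)ᵀ *ᵥ y) - ((Km i j)ᵀ *ᵥ (Bᵀ *ᵥ y))) ⬝ᵥ
            (Pbar i)⁻¹ *ᵥ (((A i + B * Km i j)ᵀ *ᵥ y) - ((Km i j)ᵀ *ᵥ (Bᵀ *ᵥ y)))
          ≤ (1 + δ) * ((y ⬝ᵥ (Pbar j)⁻¹ *ᵥ y) - ε * (y ⬝ᵥ y))
            + (1 + 1/δ) * ((1/a₁) * (c * ((Bᵀ *ᵥ y) ⬝ᵥ (Bᵀ *ᵥ y)))) := by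
        have t1 := mul_le_mul_of_nonneg_left h_dual (by positivity : (0:ℝ) ≤ 1 + δ)
        have t2 := mul_le_mul_of_nonneg_left h_r h1δ.le
        linarith [h_young]
      have s2 := mul_le_mul_of_nonneg_left s1 ht₀.le
      have s3 : t₀ * ((1 + 1/δ) * ((1/a₁) * (c * ((Bᵀ *ᵥ y) ⬝ᵥ (Bᵀ *ᵥ y)))))
          = (Bᵀ *ᵥ y) ⬝ᵥ (Bᵀ *ᵥ y) := by
        calc t₀ * ((1 + 1/δ) * ((1/a₁) * (c * ((Bᵀ *ᵥ y) ⬝ᵥ (Bᵀ *ᵥ y)))))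
            = (t₀ * ((1 + 1/δ) * ((1/a₁) * c))) * ((Bᵀ *ᵥ y) ⬝ᵥ (Bᵀ *ᵥ y)) := by ring
          _ = (Bᵀ *ᵥ y) ⬝ᵥ (Bᵀ *ᵥ y) := by rw [hco, one_mul]
      have s4 : t₀ * (δ * (y ⬝ᵥ (Pbar j)⁻¹ *ᵥ y)) ≤ t₀ * (δ * ((1/a₁) * (y ⬝ᵥ y))) :=
        mul_le_mul_of_nonneg_left (mul_le_mul_of_nonneg_left h_qj hδ.le) ht₀.le
      have s5 : t₀ * (δ * ((1/a₁) * (y ⬝ᵥ y))) = t₀ * ((ε/2) * (y ⬝ᵥ y)) := by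
        calc t₀ * (δ * ((1/a₁) * (y ⬝ᵥ y))) = t₀ * ((δ * (1/a₁)) * (y ⬝ᵥ y)) := by ring
          _ = t₀ * ((ε/2) * (y ⬝ᵥ y)) := by rw [hδa]
      have hpos1 : 0 < t₀ * (ε * (y ⬝ᵥ y)) := mul_pos ht₀ (mul_pos hε hyy)
      have hpos2 : 0 < t₀ * (δ * (ε * (y ⬝ᵥ y))) :=
        mul_pos ht₀ (mul_pos hδ (mul_pos hε hyy))
      nlinarith [s2, s3, s4, s5, hpos1, hpos2]
end

section
/- Let Ψ be a real symmetric n×n matrix, Γ a real m×n matrix and Ω a real p×n matrix. There exists a real m×p matrix Λ such that Ψ + ΓᵀΛΩ + ΩᵀΛᵀΓ ≻ 0 if and only if both of the following hold: xᵀΨx > 0 for every nonzero x in the kernel of Γ, and xᵀΨx > 0 for every nonzero x in the kernel of Ω. -/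
open Matrix

private lemma pl_exists_comp_eq {V W U : Type*} [AddCommGroup V] [AddCommGroup W] [AddCommGroup U]
    [Module ℝ V] [Module ℝ W] [Module ℝ U]
    (f : V →ₗ[ℝ] W) (g : V →ₗ[ℝ] U) (hk : LinearMap.ker f ≤ LinearMap.ker g) :
    ∃ h : W →ₗ[ℝ] U, h ∘ₗ f = g := by
  obtain ⟨h₀, hh₀⟩ := LinearMap.exists_extend
    (((LinearMap.ker f).liftQ g hk) ∘ₗ f.quotKerEquivRange.symm.toLinearMap)
  refine ⟨h₀, ?_⟩
  ext x
  have h2 : f.quotKerEquivRange.symm ⟨f x, LinearMap.mem_range_self f x⟩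
      = Submodule.Quotient.mk x := by
    rw [LinearEquiv.symm_apply_eq]
    exact Subtype.ext (LinearMap.quotKerEquivRange_apply_mk f x).symm
  calc h₀ (f x) = (h₀ ∘ₗ (LinearMap.range f).subtype) ⟨f x, LinearMap.mem_range_self f x⟩ := rfl
    _ = g x := by rw [hh₀]; simp [h2]

private lemma pl_mat_factor {k m n : ℕ} (A : Matrix (Fin k) (Fin n) ℝ)
    (Γ : Matrix (Fin m) (Fin n) ℝ)
    (h : ∀ x, Γ *ᵥ x = 0 → A *ᵥ x = 0) : ∃ S : Matrix (Fin k) (Fin m) ℝ, A = S * Γ := by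
  obtain ⟨h₀, hh₀⟩ := pl_exists_comp_eq Γ.mulVecLin A.mulVecLin (by
    intro x hx
    simp only [LinearMap.mem_ker, mulVecLin_apply] at *
    exact h x hx)
  refine ⟨LinearMap.toMatrix' h₀, ?_⟩
  have h3 : LinearMap.toMatrix' (h₀ ∘ₗ Γ.mulVecLin) = LinearMap.toMatrix' A.mulVecLin :=
    congrArg _ hh₀
  rw [LinearMap.toMatrix'_comp, ← Matrix.toLin'_apply', LinearMap.toMatrix'_toLin',
    ← Matrix.toLin'_apply', LinearMap.toMatrix'_toLin'] at h3
  exact h3.symm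

private lemma pl_exists_isCompl_le {V : Type*} [AddCommGroup V] [Module ℝ V]
    (U X : Submodule ℝ V) (h : U ⊔ X = ⊤) :
    ∃ R : Submodule ℝ V, R ≤ X ∧ IsCompl U R := by
  obtain ⟨R₀, hR₀⟩ := Submodule.exists_isCompl ((U ⊓ X).comap X.subtype)
  refine ⟨R₀.map X.subtype, Submodule.map_subtype_le X R₀, ?_⟩
  constructor
  · rw [disjoint_iff]
    ext v
    simp only [Submodule.mem_inf, Submodule.mem_bot]
    constructor
    · rintro ⟨hvU, hvR⟩
      obtain ⟨⟨w, hwX⟩, hwR₀, hwv⟩ := hvR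
      have hw : (⟨w, hwX⟩ : X) ∈ (U ⊓ X).comap X.subtype := by
        simp only [Submodule.mem_comap, Submodule.coe_subtype, Submodule.mem_inf]
        exact ⟨by rwa [← hwv] at hvU, hwX⟩
      have hbot := hR₀.inf_eq_bot
      have hmem : (⟨w, hwX⟩ : X) ∈ ((U ⊓ X).comap X.subtype) ⊓ R₀ := ⟨hw, hwR₀⟩
      rw [hbot] at hmem
      simp only [Submodule.mem_bot] at hmem
      rw [← hwv, hmem]; rfl
    · rintro rfl; exact ⟨Submodule.zero_mem _, Submodule.zero_mem _⟩
  · rw [codisjoint_iff, eq_top_iff]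
    intro v _
    have hv : v ∈ U ⊔ X := by rw [h]; trivial
    obtain ⟨u, hu, x, hx, hux⟩ := Submodule.mem_sup.mp hv
    have hxX : (⟨x, hx⟩ : X) ∈ (⊤ : Submodule ℝ X) := trivial
    rw [← hR₀.sup_eq_top] at hxX
    obtain ⟨a, ha, b, hb, hab⟩ := Submodule.mem_sup.mp hxX
    have haU : (a : V) ∈ U := by
      have := ha
      simp only [Submodule.mem_comap, Submodule.coe_subtype, Submodule.mem_inf] at this
      exact this.1
    refine Submodule.mem_sup.mpr ⟨u + a, U.add_mem hu haU, b, ⟨b, hb, rfl⟩, ?_⟩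
    have h2 : (a : V) + b = x := congrArg Subtype.val hab
    rw [add_assoc, h2, hux]

/-- Projection/elimination lemma: For symmetric `Ψ`, there exists `Λ`
with `Ψ + ΓᵀΛΩ + ΩᵀΛᵀΓ ≻ 0` iff `Ψ` is positive definite on `ker Γ` and on `ker Ω`. -/
theorem stmt_12 {n m p : ℕ} (Ψ : Matrix (Fin n) (Fin n) ℝ) (hΨ : Ψ.IsSymm)
    (Γ : Matrix (Fin m) (Fin n) ℝ) (Ω : Matrix (Fin p) (Fin n) ℝ) :
    (∃ Λ : Matrix (Fin m) (Fin p) ℝ, (Ψ + Γᵀ * Λ * Ω + Ωᵀ * Λᵀ * Γ).PosDef) ↔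
      ((∀ x : Fin n → ℝ, x ≠ 0 → Γ *ᵥ x = 0 → 0 < x ⬝ᵥ (Ψ *ᵥ x)) ∧
       (∀ x : Fin n → ℝ, x ≠ 0 → Ω *ᵥ x = 0 → 0 < x ⬝ᵥ (Ψ *ᵥ x))) := by
  constructor
  · rintro ⟨Λ, hPD⟩
    have key : ∀ x : Fin n → ℝ, x ≠ 0 → (Γ *ᵥ x = 0 ∨ Ω *ᵥ x = 0) → 0 < x ⬝ᵥ (Ψ *ᵥ x) := by
      intro x hx hker
      have h := hPD.dotProduct_mulVec_pos hx
      rw [star_trivial] at h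
      have e1 : x ⬝ᵥ ((Γᵀ * Λ * Ω) *ᵥ x) = (Γ *ᵥ x) ⬝ᵥ (Λ *ᵥ (Ω *ᵥ x)) := by
        rw [← mulVec_mulVec, ← mulVec_mulVec, dotProduct_mulVec, vecMul_transpose]
      have e2 : x ⬝ᵥ ((Ωᵀ * Λᵀ * Γ) *ᵥ x) = (Ω *ᵥ x) ⬝ᵥ (Λᵀ *ᵥ (Γ *ᵥ x)) := by
        rw [← mulVec_mulVec, ← mulVec_mulVec, dotProduct_mulVec, vecMul_transpose]
      have hz1 : (Γ *ᵥ x) ⬝ᵥ (Λ *ᵥ (Ω *ᵥ x)) = 0 := by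
        rcases hker with hk | hk
        · rw [hk, zero_dotProduct]
        · rw [hk, mulVec_zero, dotProduct_zero]
      have hz2 : (Ω *ᵥ x) ⬝ᵥ (Λᵀ *ᵥ (Γ *ᵥ x)) = 0 := by
        rcases hker with hk | hk
        · rw [hk, mulVec_zero, dotProduct_zero]
        · rw [hk, zero_dotProduct]
      rw [add_mulVec, add_mulVec, dotProduct_add, dotProduct_add, e1, e2, hz1, hz2,
        add_zero, add_zero] at h
      exact h
    exact ⟨fun x hx hk => key x hx (Or.inl hk), fun x hx hk => key x hx (Or.inr hk)⟩
  · rintro ⟨h1, h2⟩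
    classical
    -- the symmetric bilinear form of Ψ
    set B : LinearMap.BilinForm ℝ (Fin n → ℝ) :=
      LinearMap.mk₂ ℝ (fun x y => x ⬝ᵥ (Ψ *ᵥ y))
        (fun m₁ m₂ nn => by rw [add_dotProduct])
        (fun c mm nn => by rw [smul_dotProduct])
        (fun mm n₁ n₂ => by rw [mulVec_add, dotProduct_add])
        (fun c mm nn => by rw [mulVec_smul, dotProduct_smul]) with hBdef
    have hBapp : ∀ x y, B x y = x ⬝ᵥ (Ψ *ᵥ y) := fun x y => rfl
    have hsym : ∀ x y : Fin n → ℝ, x ⬝ᵥ (Ψ *ᵥ y) = y ⬝ᵥ (Ψ *ᵥ x) := by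
      intro x y
      rw [dotProduct_mulVec, ← mulVec_transpose, hΨ.eq, dotProduct_comm]
    have hrefl : B.IsRefl := by
      intro x y hxy
      rw [hBapp] at *
      rw [hsym]; exact hxy
    set K : Submodule ℝ (Fin n → ℝ) := LinearMap.ker Γ.mulVecLin with hKdef
    set L : Submodule ℝ (Fin n → ℝ) := LinearMap.ker Ω.mulVecLin with hLdef
    set M : Submodule ℝ (Fin n → ℝ) := K ⊓ L with hMdef
    have hmemK : ∀ x, x ∈ K ↔ Γ *ᵥ x = 0 := by
      intro x; rw [hKdef, LinearMap.mem_ker, mulVecLin_apply]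
    have hmemL : ∀ x, x ∈ L ↔ Ω *ᵥ x = 0 := by
      intro x; rw [hLdef, LinearMap.mem_ker, mulVecLin_apply]
    have hKpos : ∀ x ∈ K, x ≠ 0 → 0 < x ⬝ᵥ (Ψ *ᵥ x) :=
      fun x hx hne => h1 x hne ((hmemK x).mp hx)
    have hLpos : ∀ x ∈ L, x ≠ 0 → 0 < x ⬝ᵥ (Ψ *ᵥ x) :=
      fun x hx hne => h2 x hne ((hmemL x).mp hx)
    have hnd : (B.restrict M).Nondegenerate := by
      constructor <;> rintro ⟨x, hx⟩ hbot <;>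
      · rw [Submodule.mk_eq_zero]
        by_contra hne
        have hx0 := hbot ⟨x, hx⟩
        simp only [LinearMap.BilinForm.restrict_apply, LinearMap.domRestrict_apply] at hx0
        rw [hBapp] at hx0
        exact absurd hx0 (ne_of_gt (hKpos x hx.1 hne))
    set Mp : Submodule ℝ (Fin n → ℝ) := B.orthogonal M with hMpdef
    have hcompl : IsCompl M Mp :=
      LinearMap.BilinForm.isCompl_orthogonal_of_restrict_nondegenerate hrefl hnd
    have hMp0 : ∀ u ∈ M, ∀ v ∈ Mp, u ⬝ᵥ (Ψ *ᵥ v) = 0 := by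
      intro u hu v hv
      have := hv u hu
      rwa [hBapp] at this
    set K' : Submodule ℝ (Fin n → ℝ) := K ⊓ Mp with hK'def
    set L' : Submodule ℝ (Fin n → ℝ) := L ⊓ Mp with hL'def
    have hMK : M ≤ K := inf_le_left
    have hML : M ≤ L := inf_le_right
    have hKsub : K ≤ M ⊔ K' := by
      intro k hk
      have hktop : k ∈ M ⊔ Mp := by rw [hcompl.sup_eq_top]; trivial
      obtain ⟨u, hu, v, hv, huv⟩ := Submodule.mem_sup.mp hktop
      have hvk : v ∈ K := by
        have : v = k - u := by rw [← huv]; abel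
        rw [this]; exact K.sub_mem hk (hMK hu)
      exact Submodule.mem_sup.mpr ⟨u, hu, v, ⟨hvk, hv⟩, huv⟩
    have hLsub : L ≤ M ⊔ L' := by
      intro k hk
      have hktop : k ∈ M ⊔ Mp := by rw [hcompl.sup_eq_top]; trivial
      obtain ⟨u, hu, v, hv, huv⟩ := Submodule.mem_sup.mp hktop
      have hvk : v ∈ L := by
        have : v = k - u := by rw [← huv]; abel
        rw [this]; exact L.sub_mem hk (hML hu)
      exact Submodule.mem_sup.mpr ⟨u, hu, v, ⟨hvk, hv⟩, huv⟩
    have hsupX : (K ⊔ L) ⊔ Mp = ⊤ := by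
      rw [eq_top_iff, ← hcompl.sup_eq_top]
      exact sup_le_sup_right (le_trans hMK le_sup_left) Mp
    obtain ⟨R, hRMp, hcR⟩ := pl_exists_isCompl_le (K ⊔ L) Mp hsupX
    -- IsCompl K' (L ⊔ R)
    have hK'L : K' ⊓ L ≤ ⊥ := by
      intro x ⟨hxK', hxL⟩
      have : x ∈ M ⊓ Mp := ⟨⟨hxK'.1, hxL⟩, hxK'.2⟩
      rwa [hcompl.inf_eq_bot] at this
    have hL'K : L' ⊓ K ≤ ⊥ := by
      intro x ⟨hxL', hxK⟩
      have : x ∈ M ⊓ Mp := ⟨⟨hxK, hxL'.1⟩, hxL'.2⟩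
      rwa [hcompl.inf_eq_bot] at this
    have hc2 : IsCompl K' (L ⊔ R) := by
      constructor
      · rw [disjoint_iff, eq_bot_iff]
        intro x ⟨hxK', hxLR⟩
        obtain ⟨l, hl, r, hr, hlr⟩ := Submodule.mem_sup.mp hxLR
        have hxKL : x - l ∈ K ⊔ L :=
          Submodule.sub_mem _ (Submodule.mem_sup_left hxK'.1) (Submodule.mem_sup_right hl)
        have hrR : x - l = r := by rw [← hlr]; abel
        have hr0 : r = 0 := by
          have : r ∈ (K ⊔ L) ⊓ R := ⟨hrR ▸ hxKL, hr⟩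
          rwa [hcR.inf_eq_bot, Submodule.mem_bot] at this
        have hxl : x = l := by rw [← hlr, hr0, add_zero]
        exact hK'L ⟨hxK', hxl ▸ hl⟩
      · rw [codisjoint_iff, eq_top_iff, ← hcR.sup_eq_top]
        have e1 : K ⊔ L ≤ K' ⊔ L := sup_le (le_trans hKsub (sup_le (le_trans hML le_sup_right)
          le_sup_left)) le_sup_right
        calc (K ⊔ L) ⊔ R ≤ (K' ⊔ L) ⊔ R := sup_le_sup_right e1 R
          _ = K' ⊔ (L ⊔ R) := sup_assoc K' L R
    have hc3 : IsCompl L' (K ⊔ R) := by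
      constructor
      · rw [disjoint_iff, eq_bot_iff]
        intro x ⟨hxL', hxKR⟩
        obtain ⟨l, hl, r, hr, hlr⟩ := Submodule.mem_sup.mp hxKR
        have hxKL : x - l ∈ K ⊔ L :=
          Submodule.sub_mem _ (Submodule.mem_sup_right hxL'.1) (Submodule.mem_sup_left hl)
        have hrR : x - l = r := by rw [← hlr]; abel
        have hr0 : r = 0 := by
          have : r ∈ (K ⊔ L) ⊓ R := ⟨hrR ▸ hxKL, hr⟩
          rwa [hcR.inf_eq_bot, Submodule.mem_bot] at this
        have hxl : x = l := by rw [← hlr, hr0, add_zero]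
        exact hL'K ⟨hxL', hxl ▸ hl⟩
      · rw [codisjoint_iff, eq_top_iff, ← hcR.sup_eq_top]
        have e1 : K ⊔ L ≤ L' ⊔ K := sup_le le_sup_right (le_trans hLsub
          (sup_le (le_trans hMK le_sup_right) le_sup_left))
        calc (K ⊔ L) ⊔ R ≤ (L' ⊔ K) ⊔ R := sup_le_sup_right e1 R
          _ = L' ⊔ (K ⊔ R) := sup_assoc L' K R
    -- the projections
    set π₂ : (Fin n → ℝ) →ₗ[ℝ] (Fin n → ℝ) :=
      K'.subtype ∘ₗ K'.projectionOnto (L ⊔ R) hc2 with hπ₂def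
    set π₃ : (Fin n → ℝ) →ₗ[ℝ] (Fin n → ℝ) :=
      L'.subtype ∘ₗ L'.projectionOnto (K ⊔ R) hc3 with hπ₃def
    set π₄ : (Fin n → ℝ) →ₗ[ℝ] (Fin n → ℝ) :=
      R.subtype ∘ₗ R.projectionOnto (K ⊔ L) hcR.symm with hπ₄def
    have hπ₂mem : ∀ x, π₂ x ∈ K' := fun x => Submodule.coe_mem _
    have hπ₃mem : ∀ x, π₃ x ∈ L' := fun x => Submodule.coe_mem _
    have hπ₄mem : ∀ x, π₄ x ∈ R := fun x => Submodule.coe_mem _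
    have hπ₂z : ∀ x ∈ L ⊔ R, π₂ x = 0 := by
      intro x hx
      simp only [hπ₂def, LinearMap.coe_comp, Function.comp_apply,
        Submodule.projectionOnto_apply_of_mem_right hc2 hx, Submodule.coe_subtype,
        ZeroMemClass.coe_zero]
    have hπ₃z : ∀ x ∈ K ⊔ R, π₃ x = 0 := by
      intro x hx
      simp only [hπ₃def, LinearMap.coe_comp, Function.comp_apply,
        Submodule.projectionOnto_apply_of_mem_right hc3 hx, Submodule.coe_subtype,
        ZeroMemClass.coe_zero]
    have hπ₄z : ∀ x ∈ K ⊔ L, π₄ x = 0 := by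
      intro x hx
      simp only [hπ₄def, LinearMap.coe_comp, Function.comp_apply,
        Submodule.projectionOnto_apply_of_mem_right hcR.symm hx, Submodule.coe_subtype,
        ZeroMemClass.coe_zero]
    have hπ₂id : ∀ x ∈ K', π₂ x = x := by
      intro x hx
      have := Submodule.projectionOnto_apply_left hc2 ⟨x, hx⟩
      simp only [hπ₂def, LinearMap.coe_comp, Function.comp_apply]
      rw [show x = ((⟨x, hx⟩ : K') : Fin n → ℝ) from rfl, this]
      rfl
    have hπ₃id : ∀ x ∈ L', π₃ x = x := by
      intro x hx
      have := Submodule.projectionOnto_apply_left hc3 ⟨x, hx⟩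
      simp only [hπ₃def, LinearMap.coe_comp, Function.comp_apply]
      rw [show x = ((⟨x, hx⟩ : L') : Fin n → ℝ) from rfl, this]
      rfl
    have hπ₄id : ∀ x ∈ R, π₄ x = x := by
      intro x hx
      have := Submodule.projectionOnto_apply_left hcR.symm ⟨x, hx⟩
      simp only [hπ₄def, LinearMap.coe_comp, Function.comp_apply]
      rw [show x = ((⟨x, hx⟩ : R) : Fin n → ℝ) from rfl, this]
      rfl
    -- the remainder lands in M
    have hrem : ∀ x : Fin n → ℝ, x - π₂ x - π₃ x - π₄ x ∈ M := by
      intro x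
      have hxtop : x ∈ R ⊔ (K ⊔ L) := by rw [hcR.symm.sup_eq_top]; trivial
      obtain ⟨r, hr, y, hy, hry⟩ := Submodule.mem_sup.mp hxtop
      obtain ⟨a, ha, b, hb, hab⟩ := Submodule.mem_sup.mp hy
      obtain ⟨m₁, hm₁, k, hk, hm₁k⟩ := Submodule.mem_sup.mp (hKsub ha)
      obtain ⟨m₂, hm₂, l, hl, hm₂l⟩ := Submodule.mem_sup.mp (hLsub hb)
      have hx : x = m₁ + m₂ + k + l + r := by
        rw [← hry, ← hab, ← hm₁k, ← hm₂l]; abel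
      have hcomp2 : π₂ x = k := by
        rw [hx]
        simp only [map_add]
        rw [hπ₂z m₁ (Submodule.mem_sup_left (hML hm₁)), hπ₂z m₂ (Submodule.mem_sup_left (hML hm₂)),
          hπ₂id k hk, hπ₂z l (Submodule.mem_sup_left hl.1), hπ₂z r (Submodule.mem_sup_right hr)]
        abel
      have hcomp3 : π₃ x = l := by
        rw [hx]
        simp only [map_add]
        rw [hπ₃z m₁ (Submodule.mem_sup_left (hMK hm₁)), hπ₃z m₂ (Submodule.mem_sup_left (hMK hm₂)),
          hπ₃z k (Submodule.mem_sup_left hk.1), hπ₃id l hl, hπ₃z r (Submodule.mem_sup_right hr)]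
        abel
      have hcomp4 : π₄ x = r := by
        rw [hx]
        simp only [map_add]
        rw [hπ₄z m₁ (Submodule.mem_sup_left (hMK hm₁)), hπ₄z m₂ (Submodule.mem_sup_left (hMK hm₂)),
          hπ₄z k (Submodule.mem_sup_left hk.1), hπ₄z l (Submodule.mem_sup_right hl.1), hπ₄id r hr]
        abel
      have : x - π₂ x - π₃ x - π₄ x = m₁ + m₂ := by
        rw [hcomp2, hcomp3, hcomp4, hx]; abel
      rw [this]
      exact M.add_mem hm₁ hm₂
    -- matrices of the projections
    set P₂ : Matrix (Fin n) (Fin n) ℝ := LinearMap.toMatrix' π₂ with hP₂def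
    set P₃ : Matrix (Fin n) (Fin n) ℝ := LinearMap.toMatrix' π₃ with hP₃def
    set P₄ : Matrix (Fin n) (Fin n) ℝ := LinearMap.toMatrix' π₄ with hP₄def
    have hP₂ : ∀ v, P₂ *ᵥ v = π₂ v := by
      intro v; rw [hP₂def, ← Matrix.toLin'_apply, Matrix.toLin'_toMatrix']
    have hP₃ : ∀ v, P₃ *ᵥ v = π₃ v := by
      intro v; rw [hP₃def, ← Matrix.toLin'_apply, Matrix.toLin'_toMatrix']
    have hP₄ : ∀ v, P₄ *ᵥ v = π₄ v := by
      intro v; rw [hP₄def, ← Matrix.toLin'_apply, Matrix.toLin'_toMatrix']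
    -- factorizations
    obtain ⟨S₃, hS₃⟩ := pl_mat_factor P₃ Γ (by
      intro v hv
      rw [hP₃, hπ₃z v (Submodule.mem_sup_left ((hmemK v).mpr hv))])
    obtain ⟨S₄, hS₄⟩ := pl_mat_factor P₄ Γ (by
      intro v hv
      rw [hP₄, hπ₄z v (Submodule.mem_sup_left ((hmemK v).mpr hv))])
    obtain ⟨T₂, hT₂⟩ := pl_mat_factor P₂ Ω (by
      intro v hv
      rw [hP₂, hπ₂z v (Submodule.mem_sup_left ((hmemL v).mpr hv))])
    obtain ⟨T₄, hT₄⟩ := pl_mat_factor P₄ Ω (by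
      intro v hv
      rw [hP₄, hπ₄z v (Submodule.mem_sup_right ((hmemL v).mpr hv))])
    refine ⟨-(S₃ᵀ * Ψ * T₂) - S₃ᵀ * Ψ * T₄ - S₄ᵀ * Ψ * T₂ + (2⁻¹ : ℝ) • (S₄ᵀ * T₄)
      - (2⁻¹ : ℝ) • (S₄ᵀ * Ψ * T₄), ?_⟩
    set Λ : Matrix (Fin m) (Fin p) ℝ := -(S₃ᵀ * Ψ * T₂) - S₃ᵀ * Ψ * T₄ - S₄ᵀ * Ψ * T₂
      + (2⁻¹ : ℝ) • (S₄ᵀ * T₄) - (2⁻¹ : ℝ) • (S₄ᵀ * Ψ * T₄) with hΛdef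
    -- the key quadratic computation
    have hquad : ∀ x : Fin n → ℝ,
        x ⬝ᵥ ((Ψ + Γᵀ * Λ * Ω + Ωᵀ * Λᵀ * Γ) *ᵥ x)
          = (x - π₂ x - π₃ x - π₄ x) ⬝ᵥ (Ψ *ᵥ (x - π₂ x - π₃ x - π₄ x))
            + (π₂ x) ⬝ᵥ (Ψ *ᵥ (π₂ x)) + (π₃ x) ⬝ᵥ (Ψ *ᵥ (π₃ x)) + (π₄ x) ⬝ᵥ (π₄ x) := by
      intro x
      set a : Fin n → ℝ := x - π₂ x - π₃ x - π₄ x with hadef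
      set b : Fin n → ℝ := π₂ x with hbdef
      set c : Fin n → ℝ := π₃ x with hcdef
      set d : Fin n → ℝ := π₄ x with hddef
      have hsumx : x = a + b + c + d := by rw [hadef, hbdef, hcdef, hddef]; abel
      have haM : a ∈ M := hrem x
      have hbMp : b ∈ Mp := (hπ₂mem x).2
      have hcMp : c ∈ Mp := (hπ₃mem x).2
      have hdMp : d ∈ Mp := hRMp (hπ₄mem x)
      -- cross terms with a vanish
      have hab : a ⬝ᵥ (Ψ *ᵥ b) = 0 := hMp0 a haM b hbMp
      have hac : a ⬝ᵥ (Ψ *ᵥ c) = 0 := hMp0 a haM c hcMp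
      have had : a ⬝ᵥ (Ψ *ᵥ d) = 0 := hMp0 a haM d hdMp
      have hba : b ⬝ᵥ (Ψ *ᵥ a) = 0 := by rw [hsym]; exact hab
      have hca : c ⬝ᵥ (Ψ *ᵥ a) = 0 := by rw [hsym]; exact hac
      have hda : d ⬝ᵥ (Ψ *ᵥ a) = 0 := by rw [hsym]; exact had
      -- the correction term
      have hTb : T₂ *ᵥ (Ω *ᵥ x) = b := by rw [mulVec_mulVec, ← hT₂, hP₂]
      have hTd : T₄ *ᵥ (Ω *ᵥ x) = d := by rw [mulVec_mulVec, ← hT₄, hP₄]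
      have hSc : ∀ u : Fin n → ℝ, (Γ *ᵥ x) ⬝ᵥ (S₃ᵀ *ᵥ u) = c ⬝ᵥ u := by
        intro u
        rw [dotProduct_mulVec, vecMul_transpose, mulVec_mulVec, ← hS₃, hP₃]
      have hSd : ∀ u : Fin n → ℝ, (Γ *ᵥ x) ⬝ᵥ (S₄ᵀ *ᵥ u) = d ⬝ᵥ u := by
        intro u
        rw [dotProduct_mulVec, vecMul_transpose, mulVec_mulVec, ← hS₄, hP₄]
      have hcross : x ⬝ᵥ ((Γᵀ * Λ * Ω) *ᵥ x)
          = -(c ⬝ᵥ (Ψ *ᵥ b)) - c ⬝ᵥ (Ψ *ᵥ d) - d ⬝ᵥ (Ψ *ᵥ b) + 2⁻¹ * (d ⬝ᵥ d)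
            - 2⁻¹ * (d ⬝ᵥ (Ψ *ᵥ d)) := by
        have e1 : x ⬝ᵥ ((Γᵀ * Λ * Ω) *ᵥ x) = (Γ *ᵥ x) ⬝ᵥ (Λ *ᵥ (Ω *ᵥ x)) := by
          rw [← mulVec_mulVec, ← mulVec_mulVec, dotProduct_mulVec, vecMul_transpose]
        rw [e1, hΛdef]
        rw [sub_mulVec, add_mulVec, sub_mulVec, sub_mulVec, neg_mulVec,
          smul_mulVec, smul_mulVec]
        rw [dotProduct_sub, dotProduct_add, dotProduct_sub, dotProduct_sub,
          dotProduct_neg, dotProduct_smul, dotProduct_smul]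
        simp only [← mulVec_mulVec]
        rw [hTb, hTd, hSc, hSc, hSd, hSd, hSd]
        simp only [smul_eq_mul]
      have hcross2 : x ⬝ᵥ ((Ωᵀ * Λᵀ * Γ) *ᵥ x) = x ⬝ᵥ ((Γᵀ * Λ * Ω) *ᵥ x) := by
        have e2 : x ⬝ᵥ ((Ωᵀ * Λᵀ * Γ) *ᵥ x) = (Ω *ᵥ x) ⬝ᵥ (Λᵀ *ᵥ (Γ *ᵥ x)) := by
          rw [← mulVec_mulVec, ← mulVec_mulVec, dotProduct_mulVec, vecMul_transpose]
        have e1 : x ⬝ᵥ ((Γᵀ * Λ * Ω) *ᵥ x) = (Γ *ᵥ x) ⬝ᵥ (Λ *ᵥ (Ω *ᵥ x)) := by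
          rw [← mulVec_mulVec, ← mulVec_mulVec, dotProduct_mulVec, vecMul_transpose]
        rw [e1, e2, dotProduct_mulVec, vecMul_transpose, dotProduct_comm]
      have hexpand : x ⬝ᵥ (Ψ *ᵥ x)
          = a ⬝ᵥ (Ψ *ᵥ a) + a ⬝ᵥ (Ψ *ᵥ b) + a ⬝ᵥ (Ψ *ᵥ c) + a ⬝ᵥ (Ψ *ᵥ d)
            + b ⬝ᵥ (Ψ *ᵥ a) + b ⬝ᵥ (Ψ *ᵥ b) + b ⬝ᵥ (Ψ *ᵥ c) + b ⬝ᵥ (Ψ *ᵥ d)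
            + c ⬝ᵥ (Ψ *ᵥ a) + c ⬝ᵥ (Ψ *ᵥ b) + c ⬝ᵥ (Ψ *ᵥ c) + c ⬝ᵥ (Ψ *ᵥ d)
            + d ⬝ᵥ (Ψ *ᵥ a) + d ⬝ᵥ (Ψ *ᵥ b) + d ⬝ᵥ (Ψ *ᵥ c) + d ⬝ᵥ (Ψ *ᵥ d) := by
        conv_lhs => rw [hsumx]
        simp only [mulVec_add, dotProduct_add, add_dotProduct]
        ring
      have hsbc : b ⬝ᵥ (Ψ *ᵥ c) = c ⬝ᵥ (Ψ *ᵥ b) := hsym b c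
      have hsbd : b ⬝ᵥ (Ψ *ᵥ d) = d ⬝ᵥ (Ψ *ᵥ b) := hsym b d
      have hscd : c ⬝ᵥ (Ψ *ᵥ d) = d ⬝ᵥ (Ψ *ᵥ c) := hsym c d
      rw [add_mulVec, add_mulVec, dotProduct_add, dotProduct_add, hcross2, hcross, hexpand]
      linarith
    -- conclude positive definiteness
    refine Matrix.PosDef.of_dotProduct_mulVec_pos ?_ ?_
    · show (Ψ + Γᵀ * Λ * Ω + Ωᵀ * Λᵀ * Γ).IsSymm
      have e1 : (Γᵀ * Λ * Ω)ᵀ = Ωᵀ * Λᵀ * Γ := by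
        rw [transpose_mul, transpose_mul, transpose_transpose, Matrix.mul_assoc]
      have e2 : (Ωᵀ * Λᵀ * Γ)ᵀ = Γᵀ * Λ * Ω := by
        rw [transpose_mul, transpose_mul, transpose_transpose, transpose_transpose,
          Matrix.mul_assoc]
      rw [Matrix.IsSymm, transpose_add, transpose_add, hΨ.eq, e1, e2]
      abel
    · intro x hx
      rw [star_trivial, hquad x]
      set a : Fin n → ℝ := x - π₂ x - π₃ x - π₄ x with hadef
      set b : Fin n → ℝ := π₂ x with hbdef
      set c : Fin n → ℝ := π₃ x with hcdef
      set d : Fin n → ℝ := π₄ x with hddef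
      have hsumx : x = a + b + c + d := by rw [hadef, hbdef, hcdef, hddef]; abel
      have haM : a ∈ M := hrem x
      have hbK : b ∈ K := (hπ₂mem x).1
      have hcL : c ∈ L := (hπ₃mem x).1
      have h1a : 0 ≤ a ⬝ᵥ (Ψ *ᵥ a) ∧ (a ≠ 0 → 0 < a ⬝ᵥ (Ψ *ᵥ a)) := by
        rcases eq_or_ne a 0 with h | h
        · constructor
          · rw [h, zero_dotProduct]
          · intro h'; exact absurd h h'
        · exact ⟨le_of_lt (hKpos a (hMK haM) h), fun _ => hKpos a (hMK haM) h⟩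
      have h1b : 0 ≤ b ⬝ᵥ (Ψ *ᵥ b) ∧ (b ≠ 0 → 0 < b ⬝ᵥ (Ψ *ᵥ b)) := by
        rcases eq_or_ne b 0 with h | h
        · constructor
          · rw [h, zero_dotProduct]
          · intro h'; exact absurd h h'
        · exact ⟨le_of_lt (hKpos b hbK h), fun _ => hKpos b hbK h⟩
      have h1c : 0 ≤ c ⬝ᵥ (Ψ *ᵥ c) ∧ (c ≠ 0 → 0 < c ⬝ᵥ (Ψ *ᵥ c)) := by
        rcases eq_or_ne c 0 with h | h
        · constructor
          · rw [h, zero_dotProduct]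
          · intro h'; exact absurd h h'
        · exact ⟨le_of_lt (hLpos c hcL h), fun _ => hLpos c hcL h⟩
      have h1d : 0 ≤ d ⬝ᵥ d ∧ (d ≠ 0 → 0 < d ⬝ᵥ d) := by
        constructor
        · exact Finset.sum_nonneg fun i _ => mul_self_nonneg _
        · intro h
          rcases lt_or_eq_of_le (Finset.sum_nonneg fun i _ => mul_self_nonneg (d i) :
            (0:ℝ) ≤ d ⬝ᵥ d) with h' | h'
          · exact h'
          · exact absurd (dotProduct_self_eq_zero.mp h'.symm) h
      have hone : a ≠ 0 ∨ b ≠ 0 ∨ c ≠ 0 ∨ d ≠ 0 := by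
        by_contra hcon
        push_neg at hcon
        obtain ⟨ha0, hb0, hc0, hd0⟩ := hcon
        apply hx
        rw [hsumx, ha0, hb0, hc0, hd0]
        simp
      rcases hone with h | h | h | h
      · have := h1a.2 h; linarith [h1b.1, h1c.1, h1d.1]
      · have := h1b.2 h; linarith [h1a.1, h1c.1, h1d.1]
      · have := h1c.2 h; linarith [h1a.1, h1b.1, h1d.1]
      · have := h1d.2 h; linarith [h1a.1, h1b.1, h1c.1]
end

section
/- Let ℙ ⊂ ℝ^{p} be a compact set, and let Ψ : ℙ → (real symmetric n×n matrices) and Γ : ℙ → ℝ^{m×n} be continuous. Then the following are equivalent: (i) for every π ∈ ℙ and every nonzero x ∈ ℝⁿ with Γ(π)x = 0 one has xᵀΨ(π)x > 0; (ii) there exists μ ∈ ℝ such that Ψ(π) + μΓ(π)ᵀΓ(π) ≻ 0 for all π ∈ ℙ. -/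
open Matrix

set_option maxHeartbeats 1000000 in
/-- Parameter-dependent Finsler lemma: For continuous `Ψ` (symmetric
valued) and `Γ` on a compact set `ℙ`, positivity of `Ψ(π)` on `ker Γ(π)` for all
`π ∈ ℙ` is equivalent to the existence of a single `μ ∈ ℝ` with
`Ψ(π) + μΓ(π)ᵀΓ(π) ≻ 0` for all `π ∈ ℙ`. -/
theorem stmt_13 {p n m : ℕ} (Pset : Set (Fin p → ℝ)) (hPset : IsCompact Pset)
    (Ψ : (Fin p → ℝ) → Matrix (Fin n) (Fin n) ℝ)
    (Γ : (Fin p → ℝ) → Matrix (Fin m) (Fin n) ℝ)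
    (hΨsym : ∀ π ∈ Pset, (Ψ π).IsSymm)
    (hΨcont : ContinuousOn Ψ Pset) (hΓcont : ContinuousOn Γ Pset) :
    (∀ π ∈ Pset, ∀ x : Fin n → ℝ, x ≠ 0 → Γ π *ᵥ x = 0 → 0 < x ⬝ᵥ (Ψ π *ᵥ x)) ↔
      ∃ μ : ℝ, ∀ π ∈ Pset, (Ψ π + μ • ((Γ π)ᵀ * Γ π)).PosDef := by
  -- key algebraic identity
  have quad : ∀ (π : Fin p → ℝ) (μ : ℝ) (x : Fin n → ℝ),
      x ⬝ᵥ ((Ψ π + μ • ((Γ π)ᵀ * Γ π)) *ᵥ x)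
        = x ⬝ᵥ (Ψ π *ᵥ x) + μ * ((Γ π *ᵥ x) ⬝ᵥ (Γ π *ᵥ x)) := by
    intro π μ x
    rw [add_mulVec, dotProduct_add, smul_mulVec, dotProduct_smul, ← mulVec_mulVec,
      dotProduct_mulVec x ((Γ π)ᵀ), vecMul_transpose]
    simp [smul_eq_mul]
  constructor
  · intro H
    set f : (Fin p → ℝ) × (Fin n → ℝ) → ℝ := fun z => z.2 ⬝ᵥ (Ψ z.1 *ᵥ z.2) with hf
    set g : (Fin p → ℝ) × (Fin n → ℝ) → ℝ :=
      fun z => (Γ z.1 *ᵥ z.2) ⬝ᵥ (Γ z.1 *ᵥ z.2) with hg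
    set K : Set ((Fin p → ℝ) × (Fin n → ℝ)) :=
      Pset ×ˢ Metric.sphere (0 : Fin n → ℝ) 1 with hK
    have hKc : IsCompact K := hPset.prod (isCompact_sphere 0 1)
    have hKcl : IsClosed K := hKc.isClosed
    have hfC : ContinuousOn f K := by
      have h1 : ContinuousOn (fun z : (Fin p → ℝ) × (Fin n → ℝ) => Ψ z.1) K :=
        hΨcont.comp continuousOn_fst (fun z hz => hz.1)
      have h2 : Continuous (fun q : Matrix (Fin n) (Fin n) ℝ × (Fin n → ℝ) =>
          q.2 ⬝ᵥ (q.1 *ᵥ q.2)) :=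
        continuous_snd.dotProduct (continuous_fst.matrix_mulVec continuous_snd)
      exact h2.comp_continuousOn (h1.prodMk continuousOn_snd)
    have hgC : ContinuousOn g K := by
      have h1 : ContinuousOn (fun z : (Fin p → ℝ) × (Fin n → ℝ) => Γ z.1 *ᵥ z.2) K := by
        have h2 : Continuous (fun q : Matrix (Fin m) (Fin n) ℝ × (Fin n → ℝ) =>
            q.1 *ᵥ q.2) := continuous_fst.matrix_mulVec continuous_snd
        exact h2.comp_continuousOn
          ((hΓcont.comp continuousOn_fst (fun z hz => hz.1)).prodMk continuousOn_snd)
      have h3 : Continuous (fun q : (Fin m → ℝ) × (Fin m → ℝ) => q.1 ⬝ᵥ q.2) :=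
        continuous_fst.dotProduct continuous_snd
      exact h3.comp_continuousOn (h1.prodMk h1)
    have hg0 : ∀ z, 0 ≤ g z := by
      intro z
      exact Finset.sum_nonneg fun i _ => mul_self_nonneg _
    have key : ∃ k : ℕ, ∀ z ∈ K, 0 < f z + (k : ℝ) * g z := by
      by_contra hcon
      push_neg at hcon
      set S : ℕ → Set ((Fin p → ℝ) × (Fin n → ℝ)) :=
        fun k => {z ∈ K | f z + (k : ℝ) * g z ≤ 0} with hS
      have hSsub : ∀ k, S k ⊆ K := fun k z hz => hz.1
      have hmono : ∀ k, S (k + 1) ⊆ S k := by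
        rintro k z ⟨hzK, hz⟩
        refine ⟨hzK, ?_⟩
        have := hg0 z
        push_cast at hz ⊢
        nlinarith
      have hclosed : ∀ k, IsClosed (S k) := by
        intro k
        have : S k = K ∩ (fun z => f z + (k : ℝ) * g z) ⁻¹' Set.Iic 0 := by
          ext z; simp [hS, Set.mem_sep_iff, Set.mem_preimage]
        rw [this]
        exact ContinuousOn.preimage_isClosed_of_isClosed
          (hfC.add (continuousOn_const.mul hgC)) hKcl isClosed_Iic
      have hne : ∀ k, (S k).Nonempty := by
        intro k
        obtain ⟨z, hzK, hz⟩ := hcon k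
        exact ⟨z, hzK, hz⟩
      obtain ⟨z, hz⟩ := IsCompact.nonempty_iInter_of_sequence_nonempty_isCompact_isClosed S
        hmono hne (hKc.of_isClosed_subset (hclosed 0) (hSsub 0)) hclosed
      simp only [Set.mem_iInter] at hz
      have hzK : z ∈ K := (hz 0).1
      have hgz : g z = 0 := by
        by_contra hgz
        have hgz' : 0 < g z := lt_of_le_of_ne (hg0 z) (Ne.symm hgz)
        obtain ⟨k, hk⟩ := exists_nat_gt ((-f z) / g z)
        have := (hz k).2
        rw [div_lt_iff₀ hgz'] at hk
        linarith
      have hfz : f z ≤ 0 := by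
        have := (hz 0).2
        simpa [hgz] using this
      have hΓz : Γ z.1 *ᵥ z.2 = 0 := dotProduct_self_eq_zero.mp hgz
      have hx0 : z.2 ≠ 0 := by
        intro h
        have := hzK.2
        rw [Metric.mem_sphere, h] at this
        simp at this
      exact absurd (H z.1 hzK.1 z.2 hx0 hΓz) (not_lt.mpr hfz)
    obtain ⟨k, hk⟩ := key
    refine ⟨(k : ℝ), fun π hπ => ?_⟩
    rw [posDef_iff_dotProduct_mulVec]
    constructor
    · have h1 : (Ψ π).IsHermitian := by
        rw [Matrix.IsHermitian, conjTranspose_eq_transpose_of_trivial]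
        exact hΨsym π hπ
      have h3 := isHermitian_conjTranspose_mul_self (Γ π)
      rw [conjTranspose_eq_transpose_of_trivial] at h3
      have h2 : ((k : ℝ) • ((Γ π)ᵀ * Γ π)).IsHermitian := by
        unfold Matrix.IsHermitian at h3 ⊢
        rw [conjTranspose_smul, h3]
        simp
      exact h1.add h2
    · intro x hx
      have hc : (0 : ℝ) < ‖x‖ := norm_pos_iff.mpr hx
      set y : Fin n → ℝ := ‖x‖⁻¹ • x with hy
      have hyS : ‖y‖ = 1 := by
        rw [hy, norm_smul, norm_inv, norm_norm, inv_mul_cancel₀ (ne_of_gt hc)]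
      have hyK : (π, y) ∈ K := ⟨hπ, by simpa [Metric.mem_sphere] using hyS⟩
      have hpos := hk (π, y) hyK
      simp only [hf, hg] at hpos
      have hfy : y ⬝ᵥ (Ψ π *ᵥ y) = ‖x‖⁻¹ * (‖x‖⁻¹ * (x ⬝ᵥ (Ψ π *ᵥ x))) := by
        rw [hy, mulVec_smul, smul_dotProduct, dotProduct_smul]
        simp [smul_eq_mul]
      have hgy : (Γ π *ᵥ y) ⬝ᵥ (Γ π *ᵥ y)
          = ‖x‖⁻¹ * (‖x‖⁻¹ * ((Γ π *ᵥ x) ⬝ᵥ (Γ π *ᵥ x))) := by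
        rw [hy, mulVec_smul, smul_dotProduct, dotProduct_smul]
        simp [smul_eq_mul]
      rw [hfy, hgy] at hpos
      have hgoal : 0 < x ⬝ᵥ (Ψ π *ᵥ x) + (k : ℝ) * ((Γ π *ᵥ x) ⬝ᵥ (Γ π *ᵥ x)) := by
        have h2 : 0 < ‖x‖⁻¹ := inv_pos.mpr hc
        have heq : ‖x‖⁻¹ * (‖x‖⁻¹ * (x ⬝ᵥ (Ψ π *ᵥ x)))
            + (k : ℝ) * (‖x‖⁻¹ * (‖x‖⁻¹ * ((Γ π *ᵥ x) ⬝ᵥ (Γ π *ᵥ x))))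
            = (‖x‖⁻¹ * ‖x‖⁻¹) * (x ⬝ᵥ (Ψ π *ᵥ x) + (k : ℝ) * ((Γ π *ᵥ x) ⬝ᵥ (Γ π *ᵥ x))) := by
          ring
        rw [heq] at hpos
        by_contra hle
        push_neg at hle
        nlinarith [mul_pos h2 h2]
      have : star x = x := by simp
      rw [this, quad π (k : ℝ) x]
      exact hgoal
  · rintro ⟨μ, hμ⟩ π hπ x hx hΓx
    have h := (posDef_iff_dotProduct_mulVec.mp (hμ π hπ)).2 hx
    have hsx : star x = x := by simp
    rw [hsx, quad π μ x, hΓx] at h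
    simpa using h
end

section
/- Let P be a real symmetric n×n matrix, P₊ a real symmetric positive-definite n×n matrix, A a real n×n matrix and C a real m×n matrix. There exists a real n×m matrix L such that P − (A + LC)ᵀP₊(A + LC) ≻ 0 if and only if P ≻ 0 and xᵀ(P − AᵀP₊A)x > 0 for every nonzero x ∈ ℝⁿ with Cx = 0. -/
open Matrix

private lemma factor_through' {R V W U : Type*} [Field R] [AddCommGroup V] [Module R V]
    [AddCommGroup W] [Module R W] [AddCommGroup U] [Module R U]
    (f : V →ₗ[R] U) (g : V →ₗ[R] W) (hle : LinearMap.ker g ≤ LinearMap.ker f) :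
    ∃ h : W →ₗ[R] U, f = h ∘ₗ g := by
  obtain ⟨π, hπ⟩ := (LinearMap.range g).subtype.exists_leftInverse_of_injective
    (Submodule.ker_subtype _)
  refine ⟨(((LinearMap.ker g).liftQ f hle) ∘ₗ g.quotKerEquivRange.symm.toLinearMap) ∘ₗ π, ?_⟩
  ext x
  have h1 : π (g x) = ⟨g x, ⟨x, rfl⟩⟩ := by
    have := congrArg (fun F => F ⟨g x, ⟨x, rfl⟩⟩) hπ
    simpa using this
  simp only [LinearMap.comp_apply, h1]
  have h2 : g.quotKerEquivRange.symm ⟨g x, ⟨x, rfl⟩⟩ = (LinearMap.ker g).mkQ x :=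
    g.quotKerEquivRange_symm_apply_image x ⟨x, rfl⟩
  simp only [LinearEquiv.coe_coe, h2]
  rw [Submodule.mkQ_apply, Submodule.liftQ_apply]

private lemma matrix_factor {n m p : ℕ} (M : Matrix (Fin p) (Fin n) ℝ)
    (C : Matrix (Fin m) (Fin n) ℝ) (h : ∀ x, C *ᵥ x = 0 → M *ᵥ x = 0) :
    ∃ L : Matrix (Fin p) (Fin m) ℝ, M = L * C := by
  obtain ⟨h₀, hh⟩ := factor_through' M.mulVecLin C.mulVecLin (by
    intro x hx
    rw [LinearMap.mem_ker] at hx ⊢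
    exact h x hx)
  refine ⟨LinearMap.toMatrix' h₀, ?_⟩
  have h1 : (LinearMap.toMatrix' h₀ * C).mulVecLin = M.mulVecLin := by
    rw [Matrix.mulVecLin_mul, hh]
    congr 1
    exact Matrix.toLin'_toMatrix' h₀
  have h2 : LinearMap.toMatrix' (Matrix.toLin' (LinearMap.toMatrix' h₀ * C))
      = LinearMap.toMatrix' (Matrix.toLin' M) := by
    rw [Matrix.toLin'_apply', Matrix.toLin'_apply', h1]
  rw [LinearMap.toMatrix'_toLin', LinearMap.toMatrix'_toLin'] at h2
  exact h2.symm

private lemma quad_sub {n : ℕ} (P R : Matrix (Fin n) (Fin n) ℝ) (x : Fin n → ℝ) :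
    x ⬝ᵥ ((P - R) *ᵥ x) = x ⬝ᵥ (P *ᵥ x) - x ⬝ᵥ (R *ᵥ x) := by
  rw [Matrix.sub_mulVec, dotProduct_sub]

private lemma quad_conj {n : ℕ} (Q X : Matrix (Fin n) (Fin n) ℝ) (x : Fin n → ℝ) :
    x ⬝ᵥ ((Xᵀ * Q * X) *ᵥ x) = (X *ᵥ x) ⬝ᵥ (Q *ᵥ (X *ᵥ x)) := by
  rw [← Matrix.mulVec_mulVec, ← Matrix.mulVec_mulVec, Matrix.dotProduct_mulVec,
    Matrix.vecMul_transpose]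

private lemma dot_symm {n : ℕ} {P : Matrix (Fin n) (Fin n) ℝ} (hP : Pᵀ = P)
    (a b : Fin n → ℝ) : a ⬝ᵥ (P *ᵥ b) = b ⬝ᵥ (P *ᵥ a) := by
  rw [Matrix.dotProduct_mulVec, dotProduct_comm, ← Matrix.mulVec_transpose, hP]

private lemma herm_of_symm {n : ℕ} {X : Matrix (Fin n) (Fin n) ℝ} (h : Xᵀ = X) :
    X.IsHermitian := by
  rwa [Matrix.IsHermitian, conjTranspose_eq_transpose_of_trivial]

/-- Observer-gain elimination: For symmetric `P` and symmetric positive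
definite `P₊`, there is `L` with `P − (A + LC)ᵀP₊(A + LC) ≻ 0` iff `P ≻ 0` and
`xᵀ(P − AᵀP₊A)x > 0` for all nonzero `x` with `Cx = 0`. -/
theorem stmt_14 {n m : ℕ} (P Pplus A : Matrix (Fin n) (Fin n) ℝ)
    (C : Matrix (Fin m) (Fin n) ℝ) (hP : P.IsSymm) (hPplus : Pplus.PosDef) :
    (∃ L : Matrix (Fin n) (Fin m) ℝ,
        (P - (A + L * C)ᵀ * Pplus * (A + L * C)).PosDef) ↔
      (P.PosDef ∧ ∀ x : Fin n → ℝ, x ≠ 0 → C *ᵥ x = 0 →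
        0 < x ⬝ᵥ ((P - Aᵀ * Pplus * A) *ᵥ x)) := by
  have hPplusSemi : ∀ y : Fin n → ℝ, 0 ≤ y ⬝ᵥ (Pplus *ᵥ y) := by
    intro y
    have := hPplus.posSemidef.dotProduct_mulVec_nonneg y
    rwa [star_trivial] at this
  constructor
  · rintro ⟨L, hL⟩
    have key : ∀ x : Fin n → ℝ, x ≠ 0 →
        0 < x ⬝ᵥ (P *ᵥ x) - ((A + L * C) *ᵥ x) ⬝ᵥ (Pplus *ᵥ ((A + L * C) *ᵥ x)) := by
      intro x hx
      have := hL.dotProduct_mulVec_pos hx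
      rwa [star_trivial, quad_sub, quad_conj] at this
    constructor
    · refine Matrix.PosDef.of_dotProduct_mulVec_pos (herm_of_symm hP) ?_
      intro x hx
      rw [star_trivial]
      have h1 := key x hx
      have h2 := hPplusSemi ((A + L * C) *ᵥ x)
      linarith
    · intro x hx hCx
      have hAx : (A + L * C) *ᵥ x = A *ᵥ x := by
        rw [Matrix.add_mulVec, ← Matrix.mulVec_mulVec, hCx, Matrix.mulVec_zero, add_zero]
      rw [quad_sub, quad_conj]
      have := key x hx
      rwa [hAx] at this
  · rintro ⟨hPpos, hker⟩
    classical
    have hPdet : IsUnit P.det := hPpos.det_pos.ne'.isUnit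
    set K := LinearMap.ker C.mulVecLin with hKdef
    set K' := LinearMap.range (P⁻¹ * Cᵀ).mulVecLin with hK'def
    have horth : ∀ u ∈ K, ∀ v ∈ K', u ⬝ᵥ (P *ᵥ v) = 0 := by
      rintro u hu v ⟨w, rfl⟩
      have hCu : C *ᵥ u = 0 := hu
      have h1 : P *ᵥ ((P⁻¹ * Cᵀ).mulVecLin w) = Cᵀ *ᵥ w := by
        rw [Matrix.mulVecLin_apply, Matrix.mulVec_mulVec, ← Matrix.mul_assoc,
          Matrix.mul_nonsing_inv _ hPdet, Matrix.one_mul]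
      rw [h1, Matrix.dotProduct_mulVec, Matrix.vecMul_transpose, hCu, zero_dotProduct]
    have hdisj : Disjoint K K' := by
      rw [Submodule.disjoint_def]
      intro u huK huK'
      by_contra hu
      have h0 : u ⬝ᵥ (P *ᵥ u) = 0 := horth u huK u huK'
      have h1 := hPpos.dotProduct_mulVec_pos hu
      rw [star_trivial] at h1
      linarith
    have hrank1 : C.rank + Module.finrank ℝ K = n := by
      have h1 := LinearMap.finrank_range_add_finrank_ker C.mulVecLin
      rw [Module.finrank_pi] at h1
      simpa [Matrix.rank, hKdef] using h1
    have hrank2 : Module.finrank ℝ K' = C.rank := by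
      have h1 : (P⁻¹ * Cᵀ).rank = Cᵀ.rank :=
        Matrix.rank_mul_eq_right_of_isUnit_det P⁻¹ Cᵀ (P.isUnit_nonsing_inv_det hPdet)
      rw [Matrix.rank_transpose] at h1
      exact h1
    have hcompl : IsCompl K K' := by
      refine ⟨hdisj, codisjoint_iff.mpr ?_⟩
      apply Submodule.eq_top_of_disjoint K K' _ hdisj
      rw [hrank2, Module.finrank_pi, Fintype.card_fin]
      omega
    set π : (Fin n → ℝ) →ₗ[ℝ] (Fin n → ℝ) :=
      K.subtype ∘ₗ Submodule.projectionOnto K K' hcompl with hπdef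
    have hπK : ∀ x, π x ∈ K := fun x => (Submodule.projectionOnto K K' hcompl x).2
    have hπid : ∀ u ∈ K, π u = u := by
      intro u hu
      have := Submodule.projectionOnto_apply_left hcompl ⟨u, hu⟩
      simpa [hπdef] using congrArg (Submodule.subtype K) this
    have hπsub : ∀ x, x - π x ∈ K' := by
      intro x
      have hx : x ∈ K ⊔ K' := by rw [hcompl.sup_eq_top]; trivial
      obtain ⟨u, hu, v, hv, rfl⟩ := Submodule.mem_sup.mp hx
      have hv0 : π v = 0 := by
        simp [hπdef, Submodule.projectionOnto_apply_of_mem_right hcompl hv]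
      have hπx : π (u + v) = u := by rw [map_add, hπid u hu, hv0, add_zero]
      rw [hπx]
      simpa using hv
    set Abar : Matrix (Fin n) (Fin n) ℝ := LinearMap.toMatrix' (A.mulVecLin ∘ₗ π) with hAbardef
    have hAbar : ∀ x, Abar *ᵥ x = A *ᵥ (π x) := by
      intro x
      have h1 : Abar.mulVecLin = A.mulVecLin ∘ₗ π := Matrix.toLin'_toMatrix' _
      have := congrFun (congrArg DFunLike.coe h1) x
      simpa [Matrix.mulVecLin_apply] using this
    obtain ⟨L, hL⟩ := matrix_factor (Abar - A) C (by
      intro x hx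
      have hxK : x ∈ K := hx
      rw [Matrix.sub_mulVec, hAbar, hπid x hxK, sub_self])
    refine ⟨L, ?_⟩
    have hALC : A + L * C = Abar := by rw [← hL]; abel
    rw [hALC]
    have hPplusT : Pplusᵀ = Pplus := by
      have := hPplus.isHermitian
      rwa [Matrix.IsHermitian, conjTranspose_eq_transpose_of_trivial] at this
    refine Matrix.PosDef.of_dotProduct_mulVec_pos ?_ ?_
    · apply herm_of_symm
      rw [Matrix.transpose_sub, hP, Matrix.transpose_mul, Matrix.transpose_mul,
        Matrix.transpose_transpose, hPplusT, Matrix.mul_assoc]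
    · intro x hx
      rw [star_trivial, quad_sub, quad_conj, hAbar]
      set u := π x with hudef
      have huK : u ∈ K := hπK x
      have hvK' : x - u ∈ K' := hπsub x
      have hcross : u ⬝ᵥ (P *ᵥ (x - u)) = 0 := horth u huK _ hvK'
      have hcross' : (x - u) ⬝ᵥ (P *ᵥ u) = 0 := by
        rw [dot_symm hP]; exact hcross
      have hsplit : x ⬝ᵥ (P *ᵥ x) = u ⬝ᵥ (P *ᵥ u) + (x - u) ⬝ᵥ (P *ᵥ (x - u)) := by
        have hxe : x = u + (x - u) := by abel
        calc x ⬝ᵥ (P *ᵥ x) = (u + (x - u)) ⬝ᵥ (P *ᵥ (u + (x - u))) := by rw [← hxe]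
          _ = u ⬝ᵥ (P *ᵥ u) + u ⬝ᵥ (P *ᵥ (x - u)) + ((x - u) ⬝ᵥ (P *ᵥ u)
              + (x - u) ⬝ᵥ (P *ᵥ (x - u))) := by
            rw [Matrix.mulVec_add, add_dotProduct, dotProduct_add, dotProduct_add]
          _ = u ⬝ᵥ (P *ᵥ u) + (x - u) ⬝ᵥ (P *ᵥ (x - u)) := by
            rw [hcross, hcross']; ring
      have hvPv : 0 ≤ (x - u) ⬝ᵥ (P *ᵥ (x - u)) := by
        have := hPpos.posSemidef.dotProduct_mulVec_nonneg (x - u)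
        rwa [star_trivial] at this
      by_cases hu0 : u = 0
      · have hx' := hPpos.dotProduct_mulVec_pos hx
        rw [star_trivial] at hx'
        rw [hu0]
        simp only [Matrix.mulVec_zero, dotProduct_zero, zero_dotProduct, sub_zero]
        linarith
      · have hCu : C *ᵥ u = 0 := huK
        have hkey := hker u hu0 hCu
        rw [quad_sub, quad_conj] at hkey
        linarith
end

section
/- Let P be a real symmetric n×n matrix, P₊ a real symmetric positive-definite n×n matrix, A a real n×n matrix and B a real n×m matrix. There exists a real m×n matrix K such that P − (A + BK)ᵀP₊(A + BK) ≻ 0 if and only if P ≻ 0 and yᵀ(P₊⁻¹ − AP⁻¹Aᵀ)y > 0 for every nonzero y ∈ ℝⁿ with Bᵀy = 0. -/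
open Matrix
open scoped InnerProductSpace

namespace Stmt15Aux
variable {n m : ℕ}

lemma symm_dot {M : Matrix (Fin n) (Fin n) ℝ} (hM : Mᵀ = M) (a b : Fin n → ℝ) :
    a ⬝ᵥ (M *ᵥ b) = (M *ᵥ a) ⬝ᵥ b := by
  rw [dotProduct_mulVec]
  conv_lhs => rw [← hM]
  rw [vecMul_transpose]

lemma herm_symm {M : Matrix (Fin n) (Fin n) ℝ} (hM : M.IsHermitian) : Mᵀ = M := by
  rw [← conjTranspose_eq_transpose_of_trivial]; exact hM

lemma quad_conj (F Q : Matrix (Fin n) (Fin n) ℝ) (x : Fin n → ℝ) :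
    x ⬝ᵥ ((Fᵀ * Q * F) *ᵥ x) = (F *ᵥ x) ⬝ᵥ (Q *ᵥ (F *ᵥ x)) := by
  rw [← mulVec_mulVec, ← mulVec_mulVec, dotProduct_mulVec, vecMul_transpose]

lemma cs_psd {Q : Matrix (Fin n) (Fin n) ℝ} (hQ : Q.PosSemidef) (a z : Fin n → ℝ) :
    (a ⬝ᵥ (Q *ᵥ z)) ^ 2 ≤ (a ⬝ᵥ (Q *ᵥ a)) * (z ⬝ᵥ (Q *ᵥ z)) := by
  have hQs := herm_symm hQ.isHermitian
  have hza : z ⬝ᵥ (Q *ᵥ a) = a ⬝ᵥ (Q *ᵥ z) := by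
    rw [symm_dot hQs z a, dotProduct_comm]
  have key : ∀ t : ℝ, 0 ≤ (z ⬝ᵥ (Q *ᵥ z)) * (t * t) + (2 * (a ⬝ᵥ (Q *ᵥ z))) * t
      + (a ⬝ᵥ (Q *ᵥ a)) := by
    intro t
    have h0 := hQ.dotProduct_mulVec_nonneg (a + t • z)
    rw [star_trivial] at h0
    calc (0:ℝ) ≤ (a + t • z) ⬝ᵥ (Q *ᵥ (a + t • z)) := h0
    _ = _ := by
      simp only [mulVec_add, mulVec_smul, dotProduct_add, add_dotProduct,
        dotProduct_smul, smul_dotProduct, smul_eq_mul, hza]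
      ring
  have hd := discrim_le_zero key
  rw [discrim] at hd
  nlinarith [hd]


lemma inner_symm_eq (a b : Fin n → ℝ) :
    ⟪(WithLp.linearEquiv 2 ℝ (Fin n → ℝ)).symm a,
      (WithLp.linearEquiv 2 ℝ (Fin n → ℝ)).symm b⟫_ℝ = a ⬝ᵥ b := by
  rw [show ((WithLp.linearEquiv 2 ℝ (Fin n → ℝ)).symm a : EuclideanSpace ℝ (Fin n))
      = (WithLp.equiv 2 _).symm a from rfl,
    show ((WithLp.linearEquiv 2 ℝ (Fin n → ℝ)).symm b : EuclideanSpace ℝ (Fin n))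
      = (WithLp.equiv 2 _).symm b from rfl,
    EuclideanSpace.inner_eq_star_dotProduct]
  simp [dotProduct_comm]

/-- Projection-based choice of the gain: if `‖Aᵀu‖ < ‖u‖` on `ker Cᵀ`,
then some `L` makes `‖(A + CL)v‖ < ‖v‖` for all `v ≠ 0`. -/
lemma proj_gain (At : Matrix (Fin n) (Fin n) ℝ) (C : Matrix (Fin n) (Fin m) ℝ)
    (hclaim : ∀ u : Fin n → ℝ, u ≠ 0 → Cᵀ *ᵥ u = 0 →
      (Atᵀ *ᵥ u) ⬝ᵥ (Atᵀ *ᵥ u) < u ⬝ᵥ u) :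
    ∃ L : Matrix (Fin m) (Fin n) ℝ, ∀ v : Fin n → ℝ, v ≠ 0 →
      ((At + C * L) *ᵥ v) ⬝ᵥ ((At + C * L) *ᵥ v) < v ⬝ᵥ v := by
  classical
  set le' : (Fin n → ℝ) ≃ₗ[ℝ] EuclideanSpace ℝ (Fin n) :=
    (WithLp.linearEquiv 2 ℝ (Fin n → ℝ)).symm with hle'
  set R : Submodule ℝ (Fin n → ℝ) := LinearMap.range C.mulVecLin with hR
  set W : Submodule ℝ (EuclideanSpace ℝ (Fin n)) := R.map le'.toLinearMap with hW
  set qmap : (Fin n → ℝ) →ₗ[ℝ] (Fin n → ℝ) :=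
    le'.symm.toLinearMap ∘ₗ W.subtype ∘ₗ (W.orthogonalProjectionOnto).toLinearMap
      ∘ₗ le'.toLinearMap ∘ₗ At.mulVecLin with hqmap
  have hqapp : ∀ v, qmap v
      = le'.symm ((W.orthogonalProjectionOnto (le' (At *ᵥ v)) : EuclideanSpace ℝ (Fin n))) := by
    intro v
    simp [hqmap, mulVecLin_apply]
  have hq1 : ∀ v, qmap v ∈ R := by
    intro v
    have hmem : ((W.orthogonalProjectionOnto (le' (At *ᵥ v)) : EuclideanSpace ℝ (Fin n))) ∈ W :=
      (W.orthogonalProjectionOnto (le' (At *ᵥ v))).2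
    obtain ⟨r, hr, hler⟩ := Submodule.mem_map.mp hmem
    have : qmap v = r := by
      rw [hqapp, ← hler]
      exact le'.symm_apply_apply r
    rw [this]; exact hr
  have hq2 : ∀ v r, r ∈ R → (At *ᵥ v - qmap v) ⬝ᵥ r = 0 := by
    intro v r hr
    have h : le' (At *ᵥ v) - ((W.orthogonalProjectionOnto (le' (At *ᵥ v)) : EuclideanSpace ℝ (Fin n))) ∈ Wᗮ :=
      Submodule.sub_starProjection_mem_orthogonal (K := W) (le' (At *ᵥ v))
    have hrW : le' r ∈ W := by
      rw [hW]; exact Submodule.mem_map_of_mem hr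
    have h2 := (Submodule.mem_orthogonal _ _).mp h (le' r) hrW
    have hproj : ((W.orthogonalProjectionOnto (le' (At *ᵥ v)) : EuclideanSpace ℝ (Fin n)))
        = le' (qmap v) := by
      rw [hqapp]
      exact (le'.apply_symm_apply _).symm
    have h3 : le' (At *ᵥ v)
        - ((W.orthogonalProjectionOnto (le' (At *ᵥ v)) : EuclideanSpace ℝ (Fin n)))
        = le' (At *ᵥ v - qmap v) := by
      rw [map_sub, hproj]
    rw [h3] at h2
    have h4 : ⟪le' r, le' (At *ᵥ v - qmap v)⟫_ℝ = r ⬝ᵥ (At *ᵥ v - qmap v) :=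
      inner_symm_eq r (At *ᵥ v - qmap v)
    rw [h4] at h2
    rw [dotProduct_comm]; exact h2
  -- choose columns
  have hcols : ∀ j : Fin n, ∃ w : Fin m → ℝ, C *ᵥ w = qmap (Pi.single j 1) := by
    intro j
    obtain ⟨w, hw⟩ := LinearMap.mem_range.mp (hq1 (Pi.single j 1))
    exact ⟨w, by rwa [mulVecLin_apply] at hw⟩
  choose ucol hucol using hcols
  set L : Matrix (Fin m) (Fin n) ℝ := Matrix.of fun i j => - ucol j i with hL
  have hCL : ∀ v, (C * L) *ᵥ v = - qmap v := by
    have heq : (C * L).mulVecLin = -qmap := by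
      apply Module.Basis.ext (Pi.basisFun ℝ (Fin n))
      intro j
      rw [Pi.basisFun_apply, mulVecLin_apply, ← mulVec_mulVec]
      have hLcol : L *ᵥ Pi.single j 1 = - ucol j := by
        rw [mulVec_single]
        funext i
        simp [hL]
      rw [hLcol, mulVec_neg, hucol j]
      simp
    intro v
    have := congrFun (congrArg (fun f : (Fin n → ℝ) →ₗ[ℝ] (Fin n → ℝ) => (f : (Fin n → ℝ) → (Fin n → ℝ))) heq) v
    simpa [mulVecLin_apply] using this
  refine ⟨L, fun v hv => ?_⟩
  have hGv : (At + C * L) *ᵥ v = At *ᵥ v - qmap v := by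
    rw [add_mulVec, hCL, sub_eq_add_neg]
  set u : Fin n → ℝ := At *ᵥ v - qmap v with hu
  rw [hGv]
  have hvv : 0 < v ⬝ᵥ v := by
    have := dotProduct_star_self_pos_iff (R := ℝ) (v := v)
    rw [star_trivial] at this
    exact this.mpr hv
  by_cases hu0 : u = 0
  · rw [hu0]; simpa using hvv
  · have hCu : Cᵀ *ᵥ u = 0 := by
      funext j
      have hrj : (C *ᵥ Pi.single j 1) ∈ R := ⟨Pi.single j 1, by rw [mulVecLin_apply]⟩
      have := hq2 v (C *ᵥ Pi.single j 1) hrj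
      rw [← hu] at this
      have hform : (Cᵀ *ᵥ u) j = u ⬝ᵥ (C *ᵥ Pi.single j 1) := by
        rw [mulVec_single]
        simp [mulVec, dotProduct, transpose_apply, mul_comm]
      rw [hform, this]
      rfl
    have h1 := hclaim u hu0 hCu
    have h2 : u ⬝ᵥ u = (Atᵀ *ᵥ u) ⬝ᵥ v := by
      have hz : u ⬝ᵥ qmap v = 0 := by
        have := hq2 v (qmap v) (hq1 v); rw [← hu] at this; exact this
      calc u ⬝ᵥ u = u ⬝ᵥ (At *ᵥ v) - u ⬝ᵥ qmap v := by
            rw [hu]; rw [dotProduct_sub]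
      _ = u ⬝ᵥ (At *ᵥ v) := by rw [hz, sub_zero]
      _ = (Atᵀ *ᵥ u) ⬝ᵥ v := by rw [dotProduct_mulVec, ← mulVec_transpose]
    -- Cauchy–Schwarz (plain dot product)
    have hcs : ((Atᵀ *ᵥ u) ⬝ᵥ v) ^ 2 ≤ ((Atᵀ *ᵥ u) ⬝ᵥ (Atᵀ *ᵥ u)) * (v ⬝ᵥ v) := by
      have := cs_psd (Q := (1 : Matrix (Fin n) (Fin n) ℝ)) Matrix.PosSemidef.one (Atᵀ *ᵥ u) v
      simpa [one_mulVec] using this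
    have hupos : 0 < u ⬝ᵥ u := by
      have := dotProduct_star_self_pos_iff (R := ℝ) (v := u)
      rw [star_trivial] at this
      exact this.mpr hu0
    nlinarith [hcs, h1, h2, hupos, hvv]

lemma dot_self_pos {v : Fin n → ℝ} (hv : v ≠ 0) : 0 < v ⬝ᵥ v := by
  have := dotProduct_star_self_pos_iff (R := ℝ) (v := v)
  rw [star_trivial] at this
  exact this.mpr hv

/-- Forward core: `P ≻ FᵀP₊F`, `P ≻ 0`, `P₊ ≻ 0` imply `yᵀP₊⁻¹y > (Fᵀy)ᵀP⁻¹(Fᵀy)`. -/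
lemma forward_core {P Pplus F : Matrix (Fin n) (Fin n) ℝ}
    (hPplus : Pplus.PosDef) (hP0 : P.PosDef)
    (hK : (P - Fᵀ * Pplus * F).PosDef) {y : Fin n → ℝ} (hy : y ≠ 0) :
    (Fᵀ *ᵥ y) ⬝ᵥ (P⁻¹ *ᵥ (Fᵀ *ᵥ y)) < y ⬝ᵥ (Pplus⁻¹ *ᵥ y) := by
  have hPdet : IsUnit P.det := hP0.det_pos.ne'.isUnit
  have hPpdet : IsUnit Pplus.det := hPplus.det_pos.ne'.isUnit
  have hPps : Pplusᵀ = Pplus := herm_symm hPplus.isHermitian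
  set w := Fᵀ *ᵥ y with hw
  set x := P⁻¹ *ᵥ w with hxdef
  have hPx : P *ᵥ x = w := by
    rw [hxdef, mulVec_mulVec, mul_nonsing_inv _ hPdet, one_mulVec]
  have htpos : 0 < y ⬝ᵥ (Pplus⁻¹ *ᵥ y) := by
    have := hPplus.inv.dotProduct_mulVec_pos hy
    rwa [star_trivial] at this
  by_cases hx : x = 0
  · rw [hx, dotProduct_zero]; exact htpos
  · have hspos : 0 < w ⬝ᵥ x := by
      have := hP0.dotProduct_mulVec_pos hx
      rw [star_trivial, hPx] at this
      rwa [dotProduct_comm] at this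
    -- z and the strict bound from hK
    set z := F *ᵥ x with hz
    have hzs : z ⬝ᵥ (Pplus *ᵥ z) < w ⬝ᵥ x := by
      have h0 := hK.dotProduct_mulVec_pos hx
      rw [star_trivial, sub_mulVec, dotProduct_sub, quad_conj, ← hz, hPx] at h0
      have hxw : x ⬝ᵥ w = w ⬝ᵥ x := dotProduct_comm _ _
      linarith [h0, hxw.symm ▸ h0]
    -- Cauchy–Schwarz with a = Pplus⁻¹ y
    set a := Pplus⁻¹ *ᵥ y with ha
    have hPa : Pplus *ᵥ a = y := by
      rw [ha, mulVec_mulVec, mul_nonsing_inv _ hPpdet, one_mulVec]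
    have haz : a ⬝ᵥ (Pplus *ᵥ z) = w ⬝ᵥ x := by
      rw [symm_dot hPps, hPa, hz, dotProduct_mulVec, ← mulVec_transpose]
    have haa : a ⬝ᵥ (Pplus *ᵥ a) = y ⬝ᵥ (Pplus⁻¹ *ᵥ y) := by
      rw [symm_dot hPps, hPa, ← ha, dotProduct_comm]
    have hcs := cs_psd hPplus.posSemidef a z
    rw [haz, haa] at hcs
    have hlt : (w ⬝ᵥ x) ^ 2 < (y ⬝ᵥ (Pplus⁻¹ *ᵥ y)) * (w ⬝ᵥ x) := by
      calc (w ⬝ᵥ x) ^ 2 ≤ (y ⬝ᵥ (Pplus⁻¹ *ᵥ y)) * (z ⬝ᵥ (Pplus *ᵥ z)) := hcs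
      _ < (y ⬝ᵥ (Pplus⁻¹ *ᵥ y)) * (w ⬝ᵥ x) := by
          exact mul_lt_mul_of_pos_left hzs htpos
    nlinarith [hlt, hspos]

end Stmt15Aux

open Matrix

/-- Controller-gain elimination: For symmetric `P` and symmetric positive
definite `P₊`, there is `K` with `P − (A + BK)ᵀP₊(A + BK) ≻ 0` iff `P ≻ 0` and
`yᵀ(P₊⁻¹ − AP⁻¹Aᵀ)y > 0` for all nonzero `y` with `Bᵀy = 0`. -/
theorem stmt_15 {n m : ℕ} (P Pplus A : Matrix (Fin n) (Fin n) ℝ)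
    (B : Matrix (Fin n) (Fin m) ℝ) (hP : P.IsSymm) (hPplus : Pplus.PosDef) :
    (∃ K : Matrix (Fin m) (Fin n) ℝ,
        (P - (A + B * K)ᵀ * Pplus * (A + B * K)).PosDef) ↔
      (P.PosDef ∧ ∀ y : Fin n → ℝ, y ≠ 0 → Bᵀ *ᵥ y = 0 →
        0 < y ⬝ᵥ ((Pplus⁻¹ - A * P⁻¹ * Aᵀ) *ᵥ y)) := by
  constructor
  · rintro ⟨K, hK⟩
    set F := A + B * K with hF
    have hPherm : P.IsHermitian := by
      rw [Matrix.IsHermitian, conjTranspose_eq_transpose_of_trivial]; exact hP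
    have hP0 : P.PosDef := by
      refine PosDef.of_dotProduct_mulVec_pos hPherm fun x hx => ?_
      rw [star_trivial]
      have h1 := hK.dotProduct_mulVec_pos hx
      rw [star_trivial] at h1
      have h2 := hPplus.posSemidef.dotProduct_mulVec_nonneg (F *ᵥ x)
      rw [star_trivial] at h2
      have he : x ⬝ᵥ ((P - Fᵀ * Pplus * F) *ᵥ x)
          = x ⬝ᵥ (P *ᵥ x) - (F *ᵥ x) ⬝ᵥ (Pplus *ᵥ (F *ᵥ x)) := by
        rw [sub_mulVec, dotProduct_sub, Stmt15Aux.quad_conj]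
      rw [he] at h1
      linarith
    refine ⟨hP0, fun y hy hBy => ?_⟩
    have hFy : Fᵀ *ᵥ y = Aᵀ *ᵥ y := by
      rw [hF, transpose_add, transpose_mul, add_mulVec, ← mulVec_mulVec, hBy,
        mulVec_zero, add_zero]
    have hcore := Stmt15Aux.forward_core hPplus hP0 hK hy
    rw [sub_mulVec, dotProduct_sub, sub_pos]
    have hgoal : y ⬝ᵥ ((A * P⁻¹ * Aᵀ) *ᵥ y) = (Aᵀ *ᵥ y) ⬝ᵥ (P⁻¹ *ᵥ (Aᵀ *ᵥ y)) := by
      rw [← mulVec_mulVec, ← mulVec_mulVec, dotProduct_mulVec, ← mulVec_transpose]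
    rw [hgoal, ← hFy]
    exact hcore
  · rintro ⟨hP0, hcond⟩
    -- square roots of Pplus and P
    have hSps : Pplus.PosSemidef := hPplus.posSemidef
    have hTps : P.PosSemidef := hP0.posSemidef
    obtain ⟨S, hSpsd, hSsq⟩ : ∃ S : Matrix (Fin n) (Fin n) ℝ, S.PosSemidef ∧ S * S = Pplus :=
      open MatrixOrder in ⟨CFC.sqrt Pplus, (CFC.sqrt_nonneg Pplus).posSemidef,
        CFC.sqrt_mul_sqrt_self Pplus hSps.nonneg⟩
    obtain ⟨T, hTpsd, hTsq⟩ : ∃ T : Matrix (Fin n) (Fin n) ℝ, T.PosSemidef ∧ T * T = P :=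
      open MatrixOrder in ⟨CFC.sqrt P, (CFC.sqrt_nonneg P).posSemidef,
        CFC.sqrt_mul_sqrt_self P hTps.nonneg⟩
    have sqrt_pd : ∀ (M R : Matrix (Fin n) (Fin n) ℝ), M.PosDef → R.PosSemidef →
        R * R = M → R.PosDef := by
      intro M R hM hR hRM
      refine PosDef.of_dotProduct_mulVec_pos hR.isHermitian fun x hx => ?_
      rcases (hR.dotProduct_mulVec_nonneg x).lt_or_eq with h | h
      · exact h
      · exfalso
        have hz : R *ᵥ x = 0 := (hR.dotProduct_mulVec_zero_iff x).mp h.symm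
        have hpz : M *ᵥ x = 0 := by rw [← hRM, ← mulVec_mulVec, hz, mulVec_zero]
        have := hM.dotProduct_mulVec_pos hx
        rw [hpz, dotProduct_zero] at this
        exact lt_irrefl 0 this
    have hSpd : S.PosDef := sqrt_pd Pplus S hPplus hSpsd hSsq
    have hTpd : T.PosDef := sqrt_pd P T hP0 hTpsd hTsq
    have hSdet : IsUnit S.det := hSpd.det_pos.ne'.isUnit
    have hTdet : IsUnit T.det := hTpd.det_pos.ne'.isUnit
    have hSinv1 : S * S⁻¹ = 1 := mul_nonsing_inv _ hSdet
    have hSinv2 : S⁻¹ * S = 1 := nonsing_inv_mul _ hSdet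
    have hTinv1 : T * T⁻¹ = 1 := mul_nonsing_inv _ hTdet
    have hTinv2 : T⁻¹ * T = 1 := nonsing_inv_mul _ hTdet
    have hSsymm : Sᵀ = S := Stmt15Aux.herm_symm hSpsd.isHermitian
    have hTsymm : Tᵀ = T := Stmt15Aux.herm_symm hTpsd.isHermitian
    have hSisymm : (S⁻¹)ᵀ = S⁻¹ := by rw [transpose_nonsing_inv, hSsymm]
    have hTisymm : (T⁻¹)ᵀ = T⁻¹ := by rw [transpose_nonsing_inv, hTsymm]
    have hPplusinv : Pplus⁻¹ = S⁻¹ * S⁻¹ := by rw [← hSsq, Matrix.mul_inv_rev]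
    have hPinv : P⁻¹ = T⁻¹ * T⁻¹ := by rw [← hTsq, Matrix.mul_inv_rev]
    set At := S * A * T⁻¹ with hAt
    set C := S * B with hC
    have claim : ∀ u : Fin n → ℝ, u ≠ 0 → Cᵀ *ᵥ u = 0 →
        (Atᵀ *ᵥ u) ⬝ᵥ (Atᵀ *ᵥ u) < u ⬝ᵥ u := by
      intro u hu hCu
      have hSu : S⁻¹ *ᵥ (S *ᵥ u) = u := by rw [mulVec_mulVec, hSinv2, one_mulVec]
      have hSu' : S *ᵥ (S⁻¹ *ᵥ u) = u := by rw [mulVec_mulVec, hSinv1, one_mulVec]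
      have hy : S *ᵥ u ≠ 0 := by
        intro h0
        apply hu
        rw [← hSu, h0, mulVec_zero]
      have hBy : Bᵀ *ᵥ (S *ᵥ u) = 0 := by
        have hCt : Cᵀ = Bᵀ * S := by rw [hC, transpose_mul, hSsymm]
        rw [mulVec_mulVec, ← hCt]
        exact hCu
      have h := hcond (S *ᵥ u) hy hBy
      rw [sub_mulVec, dotProduct_sub] at h
      have e1 : (S *ᵥ u) ⬝ᵥ (Pplus⁻¹ *ᵥ (S *ᵥ u)) = u ⬝ᵥ u := by
        have h1 : Pplus⁻¹ *ᵥ (S *ᵥ u) = S⁻¹ *ᵥ u := by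
          rw [hPplusinv, ← mulVec_mulVec, hSu]
        rw [h1, ← Stmt15Aux.symm_dot hSsymm u (S⁻¹ *ᵥ u), hSu']
      have hAtu : Atᵀ *ᵥ u = T⁻¹ *ᵥ (Aᵀ *ᵥ (S *ᵥ u)) := by
        rw [hAt, transpose_mul, transpose_mul, hTisymm, hSsymm, ← mulVec_mulVec,
          ← mulVec_mulVec]
      have e2 : (S *ᵥ u) ⬝ᵥ ((A * P⁻¹ * Aᵀ) *ᵥ (S *ᵥ u)) = (Atᵀ *ᵥ u) ⬝ᵥ (Atᵀ *ᵥ u) := by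
        rw [hAtu, hPinv, ← mulVec_mulVec, ← mulVec_mulVec, ← mulVec_mulVec,
          dotProduct_mulVec, ← mulVec_transpose, Stmt15Aux.symm_dot hTisymm]
      linarith [h, e1, e2]
    obtain ⟨L, hL⟩ := Stmt15Aux.proj_gain At C claim
    refine ⟨L * T, ?_⟩
    set F := A + B * (L * T) with hF
    have hSF : S * F = (At + C * L) * T := by
      rw [hF, hAt, hC, Matrix.add_mul, Matrix.mul_add]
      congr 1
      · rw [Matrix.mul_assoc (S * A) T⁻¹ T, hTinv2, Matrix.mul_one]
      · rw [Matrix.mul_assoc (S * B) L T, ← Matrix.mul_assoc S B (L * T)]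
    have hPps : Pplusᵀ = Pplus := Stmt15Aux.herm_symm hPplus.isHermitian
    have hherm : (P - Fᵀ * Pplus * F).IsHermitian := by
      have h1 : (Fᵀ * Pplus * F)ᵀ = Fᵀ * Pplus * F := by
        rw [transpose_mul, transpose_mul, transpose_transpose, hPps, Matrix.mul_assoc]
      rw [Matrix.IsHermitian, conjTranspose_eq_transpose_of_trivial, transpose_sub, h1, hP]
    refine PosDef.of_dotProduct_mulVec_pos hherm fun x hx => ?_
    rw [star_trivial]
    have hTxx : T⁻¹ *ᵥ (T *ᵥ x) = x := by rw [mulVec_mulVec, hTinv2, one_mulVec]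
    have hTx : T *ᵥ x ≠ 0 := by
      intro h0
      apply hx
      rw [← hTxx, h0, mulVec_zero]
    have hmain := hL (T *ᵥ x) hTx
    rw [sub_mulVec, dotProduct_sub]
    have e3 : x ⬝ᵥ (P *ᵥ x) = (T *ᵥ x) ⬝ᵥ (T *ᵥ x) := by
      rw [← hTsq, ← mulVec_mulVec, Stmt15Aux.symm_dot hTsymm]
    have e4 : x ⬝ᵥ ((Fᵀ * Pplus * F) *ᵥ x)
        = ((At + C * L) *ᵥ (T *ᵥ x)) ⬝ᵥ ((At + C * L) *ᵥ (T *ᵥ x)) := by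
      rw [Stmt15Aux.quad_conj, ← hSsq, ← mulVec_mulVec, Stmt15Aux.symm_dot hSsymm]
      have hSFx : S *ᵥ (F *ᵥ x) = (At + C * L) *ᵥ (T *ᵥ x) := by
        rw [mulVec_mulVec, hSF, ← mulVec_mulVec]
      rw [hSFx]
    rw [e3, e4]
    linarith [hmain]
end
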